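/- arXiv:1906.04640 — 6 statements merged into one kernel-verified Lean document; each statement's English description precedes it below -/
import Mathlib

section
/- Let f : ℝ → ℝ be the lift of a circle endomorphism with two turns, with turning data z₀ < y₀ < z₀ + 1, and let J = [w₀, z₀+1] be its efficient climbing interval. Then there exist a point ỹ₀ ∈ J and a sequence (ỹ_{−k})_{k≥0} with ỹ_{−0} = ỹ₀, f(ỹ_{−(k+1)}) = ỹ_{−k} for all k ≥ 0, and ỹ_{−k} ∈ ⋃_{m∈ℤ} (J + m) for all k ≥ 0, such that the forward rotation number of ỹ₀ and its backward rotation number along this sequence both exist and equal sup ρ(f); that is, lim_{n→∞} (fⁿ(ỹ₀) − ỹ₀)/n = lim_{n→∞} (ỹ₀ − ỹ_{−n})/n = sup ρ(f). -/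
open Filter Topology

/-- A degree-one lift: a continuous map `f : ℝ → ℝ` with `f (x+1) = f x + 1`. -/
def IsDegreeOneLift (f : ℝ → ℝ) : Prop :=
  Continuous f ∧ ∀ x : ℝ, f (x + 1) = f x + 1

/-- `f` is the lift of a circle endomorphism with two turns, with turning data
`z₀ < y₀ < z₀ + 1`: it is a degree-one lift, strictly antitone on `[z₀, y₀]` and
strictly monotone on `[y₀, z₀ + 1]`. -/
def IsTwoTurnsLift (f : ℝ → ℝ) (z₀ y₀ : ℝ) : Prop :=
  IsDegreeOneLift f ∧ z₀ < y₀ ∧ y₀ < z₀ + 1 ∧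
    StrictAntiOn f (Set.Icc z₀ y₀) ∧ StrictMonoOn f (Set.Icc y₀ (z₀ + 1))

/-- The rotation set `ρ(f) = { limsup (fⁿ(x) - x)/n : x ∈ ℝ }`. -/
noncomputable def rotationSet (f : ℝ → ℝ) : Set ℝ :=
  {r : ℝ | ∃ x : ℝ,
    Filter.limsup (fun n : ℕ => (f^[n] x - x) / (n : ℝ)) Filter.atTop = r}

/-- integer periodicity from unit periodicity -/
lemma lift_add_int {f : ℝ → ℝ} (hper : ∀ x : ℝ, f (x + 1) = f x + 1) :
    ∀ (m : ℤ) (x : ℝ), f (x + m) = f x + m := by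
  intro m
  induction m using Int.induction_on with
  | zero => simp
  | succ k ih =>
    intro x
    have h1 : (x : ℝ) + ((k : ℤ) + 1 : ℤ) = (x + (k : ℤ)) + 1 := by push_cast; ring
    rw [h1, hper, ih]; push_cast; ring
  | pred k ih =>
    intro x
    have h1 : (x : ℝ) + (-(k : ℤ) - 1 : ℤ) + 1 = x + (-(k : ℤ) : ℤ) := by push_cast; ring
    have := hper (x + (-(k : ℤ) - 1 : ℤ))
    rw [h1, ih] at this
    push_cast at this ⊢
    linarith

/-- basic facts about w₀ -/
lemma w0_facts {f : ℝ → ℝ} {z₀ y₀ : ℝ} (hf : IsTwoTurnsLift f z₀ y₀)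
    (w₀ : ℝ) (hw₀ : w₀ = sSup {x ∈ Set.Icc z₀ (z₀ + 1) | f x = f z₀}) :
    y₀ < w₀ ∧ w₀ < z₀ + 1 ∧ f w₀ = f z₀ ∧
      (∀ x ∈ Set.Icc z₀ w₀, f x ≤ f z₀) ∧
      (∀ x ∈ Set.Icc w₀ (z₀ + 1), f z₀ ≤ f x) := by
  obtain ⟨⟨hcont, hper⟩, hzy, hyz, hanti, hmono⟩ := hf
  have hz1 : f (z₀ + 1) = f z₀ + 1 := hper z₀
  have hfy : f y₀ < f z₀ := hanti ⟨le_rfl, hzy.le⟩ ⟨hzy.le, le_rfl⟩ hzy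
  set S := {x ∈ Set.Icc z₀ (z₀ + 1) | f x = f z₀} with hS
  have hSne : S.Nonempty := ⟨z₀, ⟨le_rfl, by linarith⟩, rfl⟩
  have hSbdd : BddAbove S := ⟨z₀ + 1, fun x hx => hx.1.2⟩
  have hSclosed : IsClosed S := by
    have : S = Set.Icc z₀ (z₀ + 1) ∩ f ⁻¹' {f z₀} := by
      ext x; simp [hS, Set.mem_setOf_eq, and_comm]
    rw [this]
    exact isClosed_Icc.inter (isClosed_singleton.preimage hcont)
  have hw₀S : w₀ ∈ S := hw₀ ▸ hSclosed.csSup_mem hSne hSbdd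
  obtain ⟨⟨hzw, hw1⟩, hwf⟩ := hw₀S
  -- there is c > y₀ with f c = f z₀
  have hiv : Set.Icc (f y₀) (f (z₀ + 1)) ⊆ f '' Set.Icc y₀ (z₀ + 1) :=
    intermediate_value_Icc hyz.le hcont.continuousOn
  obtain ⟨c, hcmem, hcf⟩ := hiv ⟨hfy.le, by linarith⟩
  have hcS : c ∈ S := ⟨⟨by linarith [hcmem.1], hcmem.2⟩, hcf⟩
  have hcy : y₀ < c := by
    rcases lt_or_eq_of_le hcmem.1 with h | h
    · exact h
    · exfalso; rw [← h] at hcf; linarith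
  have hcw : c ≤ w₀ := hw₀ ▸ le_csSup hSbdd hcS
  have hyw : y₀ < w₀ := lt_of_lt_of_le hcy hcw
  have hw1' : w₀ < z₀ + 1 := by
    rcases lt_or_eq_of_le hw1 with h | h
    · exact h
    · exfalso; rw [h] at hwf; linarith
  refine ⟨hyw, hw1', hwf, ?_, ?_⟩
  · intro x hx
    rcases le_total x y₀ with h | h
    · exact hanti.antitoneOn ⟨le_rfl, hzy.le⟩ ⟨hx.1, h⟩ hx.1
    · calc f x ≤ f w₀ := hmono.monotoneOn ⟨h, by linarith [hx.2]⟩ ⟨hyw.le, hw1⟩ hx.2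
        _ = f z₀ := hwf
  · intro x hx
    calc f z₀ = f w₀ := hwf.symm
      _ ≤ f x := hmono.monotoneOn ⟨hyw.le, hw1⟩ ⟨by linarith [hx.1], hx.2⟩ hx.1

noncomputable def upperF (f : ℝ → ℝ) (z₀ : ℝ) : ℝ → ℝ :=
  fun x => max (f x) (f z₀ + (⌊x - z₀⌋ : ℤ))

lemma upperF_add_one {f : ℝ → ℝ} (hper : ∀ x : ℝ, f (x + 1) = f x + 1) (z₀ : ℝ) :
    ∀ x, upperF f z₀ (x + 1) = upperF f z₀ x + 1 := by
  intro x
  unfold upperF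
  have h1 : x + 1 - z₀ = (x - z₀) + 1 := by ring
  rw [hper, h1, Int.floor_add_one]
  push_cast
  rw [show f z₀ + ((⌊x - z₀⌋ : ℝ) + 1) = (f z₀ + (⌊x - z₀⌋ : ℝ)) + 1 by ring,
    max_add_add_right]

lemma upperF_fund {f : ℝ → ℝ} (hper : ∀ x : ℝ, f (x + 1) = f x + 1) {z₀ : ℝ} :
    ∀ x ∈ Set.Icc z₀ (z₀ + 1), upperF f z₀ x = max (f x) (f z₀) := by
  intro x hx
  rcases lt_or_eq_of_le hx.2 with h | h
  · have : ⌊x - z₀⌋ = 0 := by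
      rw [Int.floor_eq_zero_iff]
      simp only [Set.mem_Ico]
      exact ⟨by linarith [hx.1], by linarith⟩
    unfold upperF; rw [this]; norm_num
  · subst h
    have hz1 : f (z₀ + 1) = f z₀ + 1 := hper z₀
    have : ⌊z₀ + 1 - z₀⌋ = 1 := by norm_num
    unfold upperF
    rw [this, hz1]
    push_cast
    rw [max_self, max_eq_left (by linarith)]

lemma upperF_eq_on_J {f : ℝ → ℝ} (hper : ∀ x : ℝ, f (x + 1) = f x + 1) {z₀ w₀ : ℝ}
    (hzw : z₀ ≤ w₀) (hle2 : ∀ x ∈ Set.Icc w₀ (z₀ + 1), f z₀ ≤ f x) :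
    ∀ x ∈ Set.Icc w₀ (z₀ + 1), upperF f z₀ x = f x := by
  intro x hx
  rw [upperF_fund hper x ⟨le_trans hzw hx.1, hx.2⟩]
  exact max_eq_left (hle2 x hx)

lemma upperF_mono {f : ℝ → ℝ} (hper : ∀ x : ℝ, f (x + 1) = f x + 1) {z₀ w₀ : ℝ}
    (hzw : z₀ ≤ w₀) (hw1 : w₀ ≤ z₀ + 1) (hwf : f w₀ = f z₀)
    (hle1 : ∀ x ∈ Set.Icc z₀ w₀, f x ≤ f z₀)
    (hle2 : ∀ x ∈ Set.Icc w₀ (z₀ + 1), f z₀ ≤ f x)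
    (hmonoJ : MonotoneOn f (Set.Icc w₀ (z₀ + 1))) :
    Monotone (upperF f z₀) := by
  have hperZ := lift_add_int hper
  have hFZ : ∀ (m : ℤ) (x : ℝ), upperF f z₀ (x + m) = upperF f z₀ x + m :=
    lift_add_int (upperF_add_one hper z₀)
  -- monotone on the fundamental domain
  have hmonoF : MonotoneOn (upperF f z₀) (Set.Icc z₀ (z₀ + 1)) := by
    intro a ha b hb hab
    rw [upperF_fund hper a ha, upperF_fund hper b hb]
    rcases le_total b w₀ with h | h
    · rw [max_eq_right (hle1 a ⟨ha.1, le_trans hab h⟩), max_eq_right (hle1 b ⟨hb.1, h⟩)]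
    · rcases le_total a w₀ with h' | h'
      · rw [max_eq_right (hle1 a ⟨ha.1, h'⟩), max_eq_left (hle2 b ⟨h, hb.2⟩)]
        calc f z₀ = f w₀ := hwf.symm
          _ ≤ f b := hmonoJ ⟨le_rfl, hw1⟩ ⟨h, hb.2⟩ h
      · rw [max_eq_left (hle2 a ⟨h', ha.2⟩), max_eq_left (hle2 b ⟨h, hb.2⟩)]
        exact hmonoJ ⟨h', ha.2⟩ ⟨h, hb.2⟩ hab
  intro a b hab
  set m := ⌊a - z₀⌋ with hm
  set n := ⌊b - z₀⌋ with hn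
  have hmn : m ≤ n := Int.floor_le_floor (by linarith)
  have ham : a - m ∈ Set.Icc z₀ (z₀ + 1) := by
    constructor
    · have := Int.floor_le (a - z₀); rw [← hm] at this; linarith
    · have := Int.lt_floor_add_one (a - z₀); rw [← hm] at this; push_cast at this; linarith
  have hbn : b - n ∈ Set.Icc z₀ (z₀ + 1) := by
    constructor
    · have := Int.floor_le (b - z₀); rw [← hn] at this; linarith
    · have := Int.lt_floor_add_one (b - z₀); rw [← hn] at this; push_cast at this; linarith
  have hFa : upperF f z₀ a = upperF f z₀ (a - m) + m := by
    rw [← hFZ m (a - m)]; ring_nf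
  have hFb : upperF f z₀ b = upperF f z₀ (b - n) + n := by
    rw [← hFZ n (b - n)]; ring_nf
  rw [hFa, hFb]
  rcases eq_or_lt_of_le hmn with h | h
  · rw [← h] at hbn ⊢
    have : a - m ≤ b - m := by linarith
    have := hmonoF ham hbn this
    linarith
  · have h1 : upperF f z₀ (a - m) ≤ upperF f z₀ (z₀ + 1) :=
      hmonoF ham ⟨by linarith, le_rfl⟩ ham.2
    have h2 : upperF f z₀ (z₀ + 1) = upperF f z₀ z₀ + 1 := upperF_add_one hper z₀ z₀
    have h3 : upperF f z₀ z₀ ≤ upperF f z₀ (b - n) :=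
      hmonoF ⟨le_rfl, by linarith⟩ hbn hbn.1
    have hmn1 : (m : ℝ) + 1 ≤ n := by exact_mod_cast Int.add_one_le_iff.mpr h
    linarith

def Gset (w₀ z₀ : ℝ) : Set ℝ := {x | ∃ m : ℤ, x - m ∈ Set.Icc w₀ (z₀ + 1)}

lemma Gset_shift {w₀ z₀ : ℝ} {x : ℝ} (hx : x ∈ Gset w₀ z₀) (k : ℤ) :
    x + k ∈ Gset w₀ z₀ := by
  obtain ⟨m, hm⟩ := hx
  refine ⟨m + k, ?_⟩
  have h : x + (k : ℝ) - ((m + k : ℤ) : ℝ) = x - m := by push_cast; ring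
  rw [h]; exact hm

lemma Gset_closed {w₀ z₀ : ℝ} (hzw : z₀ ≤ w₀) (hw1 : w₀ ≤ z₀ + 1) :
    IsClosed (Gset w₀ z₀) := by
  rw [← isOpen_compl_iff]
  have hcompl : (Gset w₀ z₀)ᶜ = ⋃ m : ℤ, Set.Ioo (z₀ + m) (w₀ + m) := by
    ext x
    simp only [Set.mem_compl_iff, Set.mem_iUnion, Set.mem_Ioo, Gset, Set.mem_setOf_eq]
    constructor
    · intro hx
      refine ⟨⌊x - z₀⌋, ?_, ?_⟩
      · rcases lt_or_eq_of_le (by linarith [Int.floor_le (x - z₀)] :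
          z₀ + (⌊x - z₀⌋ : ℝ) ≤ x) with h | h
        · exact h
        · exfalso
          apply hx
          refine ⟨⌊x - z₀⌋ - 1, ?_⟩
          push_cast
          constructor <;> linarith
      · by_contra h
        push_neg at h
        apply hx
        refine ⟨⌊x - z₀⌋, ?_⟩
        have := Int.lt_floor_add_one (x - z₀)
        constructor <;> [linarith; linarith]
    · rintro ⟨k, hk1, hk2⟩ ⟨m, hm1, hm2⟩
      have h1 : (m : ℝ) < k := by linarith
      have h2 : (k : ℝ) < m + 1 := by linarith
      have h1' : m < k := by exact_mod_cast h1
      have h2' : k < m + 1 := by exact_mod_cast h2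
      omega
  rw [hcompl]
  exact isOpen_iUnion fun m => isOpen_Ioo

lemma upperF_eq_on_G {f : ℝ → ℝ} (hper : ∀ x : ℝ, f (x + 1) = f x + 1) {z₀ w₀ : ℝ}
    (hzw : z₀ ≤ w₀) (hle2 : ∀ x ∈ Set.Icc w₀ (z₀ + 1), f z₀ ≤ f x) :
    ∀ x ∈ Gset w₀ z₀, upperF f z₀ x = f x := by
  intro x hx
  obtain ⟨m, hm⟩ := hx
  have hFZ := lift_add_int (upperF_add_one hper z₀)
  have hperZ := lift_add_int hper
  have h1 : x = (x - m) + m := by ring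
  rw [h1, hFZ, hperZ, upperF_eq_on_J hper hzw hle2 _ hm]

/-- every real has an f-preimage in Gset -/
lemma preimage_in_G {f : ℝ → ℝ} (hcont : Continuous f)
    (hper : ∀ x : ℝ, f (x + 1) = f x + 1) {z₀ w₀ : ℝ}
    (hw1 : w₀ ≤ z₀ + 1) (hwf : f w₀ = f z₀) :
    ∀ t : ℝ, ∃ s ∈ Gset w₀ z₀, f s = t := by
  intro t
  set m := ⌊t - f z₀⌋ with hm
  have h1 : f z₀ + (m : ℝ) ≤ t := by
    have := Int.floor_le (t - f z₀); rw [← hm] at this; linarith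
  have h2 : t < f z₀ + 1 + m := by
    have := Int.lt_floor_add_one (t - f z₀); rw [← hm] at this; linarith
  have hiv : Set.Icc (f w₀) (f (z₀ + 1)) ⊆ f '' Set.Icc w₀ (z₀ + 1) :=
    intermediate_value_Icc hw1 hcont.continuousOn
  have hz1 : f (z₀ + 1) = f z₀ + 1 := hper z₀
  obtain ⟨s₀, hs₀mem, hs₀⟩ := hiv (show t - (m : ℝ) ∈ Set.Icc (f w₀) (f (z₀ + 1)) from
    ⟨by rw [hwf]; linarith, by rw [hz1]; linarith⟩)
  refine ⟨s₀ + m, ⟨m, by simpa using hs₀mem⟩, ?_⟩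
  rw [lift_add_int hper m s₀, hs₀]
  ring

theorem backward_orbit_in_efficient_climbing_interval
    (f : ℝ → ℝ) (z₀ y₀ : ℝ) (hf : IsTwoTurnsLift f z₀ y₀)
    (w₀ : ℝ) (hw₀ : w₀ = sSup {x ∈ Set.Icc z₀ (z₀ + 1) | f x = f z₀})
    (J : Set ℝ) (hJ : J = Set.Icc w₀ (z₀ + 1)) :
    ∃ y : ℕ → ℝ,
      y 0 ∈ J ∧
      (∀ k : ℕ, f (y (k + 1)) = y k) ∧
      (∀ k : ℕ, ∃ m : ℤ, y k - (m : ℝ) ∈ J) ∧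
      Tendsto (fun n : ℕ => (f^[n] (y 0) - y 0) / (n : ℝ)) atTop
        (𝓝 (sSup (rotationSet f))) ∧
      Tendsto (fun n : ℕ => (y 0 - y n) / (n : ℝ)) atTop
        (𝓝 (sSup (rotationSet f))) := by
  obtain ⟨⟨hcont, hper⟩, hzy, hyz, hanti, hmono⟩ := hf
  obtain ⟨hyw, hw1, hwf, hle1, hle2⟩ :=
    w0_facts ⟨⟨hcont, hper⟩, hzy, hyz, hanti, hmono⟩ w₀ hw₀
  have hzw : z₀ ≤ w₀ := le_trans hzy.le hyw.le
  have hmonoJ : MonotoneOn f (Set.Icc w₀ (z₀ + 1)) :=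
    (hmono.monotoneOn).mono (Set.Icc_subset_Icc hyw.le le_rfl)
  have hperZ := lift_add_int hper
  set F := upperF f z₀ with hFdef
  have hFmono : Monotone F := upperF_mono hper hzw hw1.le hwf hle1 hle2 hmonoJ
  have hFper : ∀ x, F (x + 1) = F x + 1 := upperF_add_one hper z₀
  set Fb : CircleDeg1Lift := ⟨⟨F, hFmono⟩, hFper⟩ with hFb
  set τ := Fb.translationNumber with hτ
  have hFbpow : ∀ (n : ℕ) (x : ℝ), (Fb ^ n) x = F^[n] x := by
    intro n x
    rw [CircleDeg1Lift.coe_pow]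
    rfl
  -- uniform deviation bounds for iterates of F
  have hup : ∀ (n : ℕ) (x : ℝ), F^[n] x < x + n * τ + 1 := by
    intro n x
    have h := (Fb ^ n).map_lt_add_translationNumber_add_one x
    rwa [CircleDeg1Lift.translationNumber_pow, hFbpow] at h
  have hlow : ∀ (n : ℕ) (x : ℝ), x + n * τ - 1 < F^[n] x := by
    intro n x
    have hc : ((⌈(n : ℝ) * τ⌉ - 1 : ℤ) : ℝ) < CircleDeg1Lift.translationNumber (Fb ^ n) := by
      rw [CircleDeg1Lift.translationNumber_pow]
      push_cast
      linarith [Int.ceil_lt_add_one ((n : ℝ) * τ)]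
    have h := (Fb ^ n).lt_map_of_int_lt_translationNumber hc x
    rw [hFbpow] at h
    have h2 : x + (n : ℝ) * τ - 1 ≤ x + ((⌈(n : ℝ) * τ⌉ - 1 : ℤ) : ℝ) := by
      push_cast
      linarith [Int.le_ceil ((n : ℝ) * τ)]
    linarith
  have hGF : ∀ x ∈ Gset w₀ z₀, F x = f x := upperF_eq_on_G hper hzw hle2
  have hGcl : IsClosed (Gset w₀ z₀) := Gset_closed hzw hw1.le
  have hJG : J ⊆ Gset w₀ z₀ := by
    intro x hx
    exact ⟨0, by rw [Int.cast_zero, sub_zero]; exact hJ ▸ hx⟩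
  obtain ⟨g, hg⟩ := Classical.axiomOfChoice (preimage_in_G hcont hper hw1.le hwf)
  have hg1 : ∀ t, g t ∈ Gset w₀ z₀ := fun t => (hg t).1
  have hg2 : ∀ t, f (g t) = t := fun t => (hg t).2
  -- auxiliary backward orbit from w₀
  set b : ℕ → ℝ := fun k => g^[k] w₀ with hb
  have hbstep : ∀ k, f (b (k + 1)) = b k := by
    intro k
    show f (g^[k+1] w₀) = g^[k] w₀
    rw [Function.iterate_succ_apply', hg2]
  have hbG : ∀ k, b k ∈ Gset w₀ z₀ := by
    intro k
    cases k with
    | zero =>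
      refine ⟨0, ?_⟩
      show g^[0] w₀ - ((0 : ℤ) : ℝ) ∈ _
      rw [Function.iterate_zero_apply, Int.cast_zero, sub_zero]
      exact ⟨le_rfl, hw1.le⟩
    | succ k =>
      show g^[k+1] w₀ ∈ _
      rw [Function.iterate_succ_apply']
      exact hg1 _
  obtain ⟨mZ, hmZ⟩ := Classical.axiomOfChoice hbG
  set u : ℕ → ℝ := fun N => b N - mZ N with hu
  have huJ : ∀ N, u N ∈ J := fun N => hJ ▸ hmZ N
  have horb : ∀ N k, k ≤ N → f^[k] (u N) = b (N - k) - mZ N := by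
    intro N k
    induction k with
    | zero => intro _; simp [hu]
    | succ k ih =>
      intro hk
      have hk' : k ≤ N := Nat.le_of_succ_le hk
      rw [Function.iterate_succ_apply', ih hk']
      have e1 : b (N - k) - ((mZ N : ℤ) : ℝ) = b (N - k) + ((-(mZ N) : ℤ) : ℝ) := by
        push_cast; ring
      rw [e1, hperZ]
      have hNk : N - k = (N - (k + 1)) + 1 := by omega
      rw [hNk, hbstep]
      push_cast; ring
  have hfkG : ∀ N k, k ≤ N → f^[k] (u N) ∈ Gset w₀ z₀ := by
    intro N k hk
    rw [horb N k hk]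
    have h := Gset_shift (hbG (N - k)) (-(mZ N))
    have e : b (N - k) - ((mZ N : ℤ) : ℝ) = b (N - k) + ((-(mZ N) : ℤ) : ℝ) := by
      push_cast; ring
    rw [e]
    exact h
  -- the forward point p
  have hJcpt : IsCompact J := hJ ▸ isCompact_Icc
  obtain ⟨p, hpJ, φ, hφmono, hφtend⟩ := hJcpt.tendsto_subseq huJ
  have hpG : ∀ k : ℕ, f^[k] p ∈ Gset w₀ z₀ := by
    intro k
    have hcontk : Continuous (f^[k]) := hcont.iterate k
    have htend : Tendsto (fun j => f^[k] (u (φ j))) atTop (𝓝 (f^[k] p)) :=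
      (hcontk.tendsto p).comp hφtend
    refine hGcl.mem_of_tendsto htend ?_
    filter_upwards [eventually_ge_atTop k] with j hj
    exact hfkG (φ j) k (le_trans hj hφmono.le_apply)
  have hfF : ∀ n : ℕ, f^[n] p = F^[n] p := by
    intro n
    induction n with
    | zero => rfl
    | succ n ih =>
      rw [Function.iterate_succ_apply', Function.iterate_succ_apply', ← ih,
        hGF _ (hpG n)]
  have hfwd : Tendsto (fun n : ℕ => (f^[n] p - p) / (n : ℝ)) atTop (𝓝 τ) := by
    have h := Fb.tendsto_translationNumber p
    refine h.congr fun n => ?_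
    rw [hFbpow, hfF]
  -- displacement of f is bounded below
  have hdisp : ∃ c : ℝ, ∀ t : ℝ, c ≤ f t - t := by
    obtain ⟨t₀, ht₀, hmin⟩ := isCompact_Icc.exists_isMinOn (Set.nonempty_Icc.mpr zero_le_one)
      (Continuous.continuousOn (by fun_prop : Continuous fun x : ℝ => f x - x))
    refine ⟨f t₀ - t₀, fun t => ?_⟩
    have h1 := hperZ ⌊t⌋ (t - ⌊t⌋)
    rw [show t - (⌊t⌋ : ℝ) + (⌊t⌋ : ℝ) = t by ring] at h1
    have h2 : t - (⌊t⌋ : ℝ) ∈ Set.Icc (0 : ℝ) 1 :=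
      ⟨by linarith [Int.floor_le t], by linarith [Int.lt_floor_add_one t]⟩
    have h3 := isMinOn_iff.mp hmin _ h2
    linarith
  -- f-iterates are dominated by F-iterates
  have hiter : ∀ (n : ℕ) (x : ℝ), f^[n] x ≤ F^[n] x := by
    intro n x
    induction n with
    | zero => exact le_rfl
    | succ n ih =>
      rw [Function.iterate_succ_apply', Function.iterate_succ_apply']
      exact le_trans (le_max_left _ _) (hFmono ih)
  have hτmem : τ ∈ rotationSet f := ⟨p, hfwd.limsup_eq⟩
  have hub : ∀ r ∈ rotationSet f, r ≤ τ := by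
    rintro r ⟨x, rfl⟩
    have hbig : Tendsto (fun n : ℕ => (F^[n] x - x) / (n : ℝ)) atTop (𝓝 τ) := by
      have h := Fb.tendsto_translationNumber x
      exact h.congr fun n => by rw [hFbpow]
    obtain ⟨c, hc⟩ := hdisp
    have hgrow : ∀ n : ℕ, x + n * c ≤ f^[n] x := by
      intro n
      induction n with
      | zero => simp
      | succ n ih =>
        rw [Function.iterate_succ_apply']
        have := hc (f^[n] x)
        push_cast
        linarith
    have hlb : ∀ n : ℕ, min c 0 ≤ (f^[n] x - x) / (n : ℝ) := by
      intro n
      rcases Nat.eq_zero_or_pos n with rfl | hn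
      · simp
      · have hn' : (0 : ℝ) < n := by exact_mod_cast hn
        have h1 : c ≤ (f^[n] x - x) / (n : ℝ) := by
          rw [le_div_iff₀ hn']
          have := hgrow n
          linarith [this]
        exact le_trans (min_le_left _ _) h1
    have hsmall : IsCoboundedUnder (· ≤ ·) atTop (fun n : ℕ => (f^[n] x - x) / (n : ℝ)) :=
      isCoboundedUnder_le_of_eventually_le atTop (Eventually.of_forall hlb)
    have hev : (fun n : ℕ => (f^[n] x - x) / (n : ℝ)) ≤ᶠ[atTop]
        (fun n : ℕ => (F^[n] x - x) / (n : ℝ)) := by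
      refine Eventually.of_forall fun n => ?_
      rcases Nat.eq_zero_or_pos n with rfl | hn
      · simp
      · have hn' : (0 : ℝ) < n := by exact_mod_cast hn
        exact (div_le_div_iff_of_pos_right hn').mpr (by linarith [hiter n x])
    calc Filter.limsup (fun n : ℕ => (f^[n] x - x) / (n : ℝ)) atTop
        ≤ Filter.limsup (fun n : ℕ => (F^[n] x - x) / (n : ℝ)) atTop :=
          limsup_le_limsup hev hsmall hbig.isBoundedUnder_le
      _ = τ := hbig.limsup_eq
  have hsup : sSup (rotationSet f) = τ :=
    le_antisymm (csSup_le ⟨τ, hτmem⟩ hub) (le_csSup ⟨τ, fun r hr => hub r hr⟩ hτmem)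
  -- the final sequence
  set yseq : ℕ → ℝ := fun k => g^[k] p with hyseq
  have hy0 : yseq 0 = p := rfl
  have hystep : ∀ k, f (yseq (k + 1)) = yseq k := by
    intro k
    show f (g^[k+1] p) = g^[k] p
    rw [Function.iterate_succ_apply', hg2]
  have hyG : ∀ k, yseq k ∈ Gset w₀ z₀ := by
    intro k
    cases k with
    | zero => exact hJG hpJ
    | succ k =>
      show g^[k+1] p ∈ _
      rw [Function.iterate_succ_apply']
      exact hg1 _
  have hFnb : ∀ n : ℕ, F^[n] (yseq n) = p := by
    intro n
    induction n with
    | zero => rfl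
    | succ n ih =>
      rw [Function.iterate_succ_apply, hGF _ (hyG (n + 1)), hystep n, ih]
  have hbwd : Tendsto (fun n : ℕ => (yseq 0 - yseq n) / (n : ℝ)) atTop (𝓝 τ) := by
    rw [hy0]
    have hgl : Tendsto (fun n : ℕ => τ - 1 / (n : ℝ)) atTop (𝓝 τ) := by
      have := tendsto_const_nhds (x := τ) (f := atTop (α := ℕ)) |>.sub
        tendsto_one_div_atTop_nhds_zero_nat
      simpa using this
    have hgu : Tendsto (fun n : ℕ => τ + 1 / (n : ℝ)) atTop (𝓝 τ) := by
      have := tendsto_const_nhds (x := τ) (f := atTop (α := ℕ)) |>.add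
        tendsto_one_div_atTop_nhds_zero_nat
      simpa using this
    refine tendsto_of_tendsto_of_tendsto_of_le_of_le' hgl hgu ?_ ?_
    · filter_upwards [eventually_ge_atTop 1] with n hn
      have hn' : (0 : ℝ) < n := by exact_mod_cast hn
      have h1 := hlow n (yseq n)
      rw [hFnb n] at h1
      rw [le_div_iff₀ hn']
      have e : (τ - 1 / (n : ℝ)) * n = n * τ - 1 := by field_simp
      linarith
    · filter_upwards [eventually_ge_atTop 1] with n hn
      have hn' : (0 : ℝ) < n := by exact_mod_cast hn
      have h1 := hup n (yseq n)
      rw [hFnb n] at h1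
      rw [div_le_iff₀ hn']
      have e : (τ + 1 / (n : ℝ)) * n = n * τ + 1 := by field_simp
      linarith
  refine ⟨yseq, hy0 ▸ hpJ, hystep, ?_, ?_, ?_⟩
  · intro k
    obtain ⟨m, hm⟩ := hyG k
    exact ⟨m, hJ ▸ hm⟩
  · rw [hsup, hy0]
    exact hfwd
  · rw [hsup]
    exact hbwd
end

section
/- Let f : ℝ → ℝ be the lift of a circle endomorphism with two turns, with turning data z₀ < y₀ < z₀ + 1, and let J′ = [y₀, w₀′] be its lower climbing interval. Then there exist a point ỹ₀ ∈ J′ and a sequence (ỹ_{−k})_{k≥0} with ỹ_{−0} = ỹ₀, f(ỹ_{−(k+1)}) = ỹ_{−k} for all k ≥ 0, and ỹ_{−k} ∈ ⋃_{m∈ℤ} (J′ + m) for all k ≥ 0, such that lim_{n→∞} (fⁿ(ỹ₀) − ỹ₀)/n = lim_{n→∞} (ỹ₀ − ỹ_{−n})/n = inf ρ(f). -/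
open Filter Topology

private lemma map_add_int' {h : ℝ → ℝ} (hh : ∀ x, h (x + 1) = h x + 1) :
    ∀ (m : ℤ) (x : ℝ), h (x + m) = h x + m := by
  have hsub : ∀ x : ℝ, h (x - 1) = h x - 1 := fun x => by
    have := hh (x - 1); rw [sub_add_cancel] at this; linarith
  intro m
  induction m using Int.induction_on with
  | zero => simp
  | succ k ih =>
    intro x
    have h1 : h (x + (k : ℝ) + 1) = h (x + (k : ℝ)) + 1 := hh _
    have h2 := ih x
    push_cast
    push_cast at h1 h2
    rw [← add_assoc, h1, h2]; ring
  | pred k ih =>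
    intro x
    have h2 := ih x
    push_cast at h2 ⊢
    rw [show x + (-(k:ℝ) - 1) = x + -(k:ℝ) - 1 by ring, hsub, h2]
    ring

private lemma iterate_map_add_int' {h : ℝ → ℝ} (hh : ∀ x, h (x + 1) = h x + 1) :
    ∀ (k : ℕ) (m : ℤ) (x : ℝ), h^[k] (x + m) = h^[k] x + m := by
  intro k
  induction k with
  | zero => intro m x; simp
  | succ k ih =>
    intro m x
    rw [Function.iterate_succ_apply', Function.iterate_succ_apply', ih m x,
      map_add_int' hh m]

theorem backward_orbit_in_lower_climbing_interval
    (f : ℝ → ℝ) (z₀ y₀ : ℝ) (hf : IsTwoTurnsLift f z₀ y₀)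
    (w₀' : ℝ) (hw₀' : w₀' = sInf {x ∈ Set.Icc y₀ (z₀ + 1) | f x = f y₀ + 1})
    (J' : Set ℝ) (hJ' : J' = Set.Icc y₀ w₀') :
    ∃ y : ℕ → ℝ,
      y 0 ∈ J' ∧
      (∀ k : ℕ, f (y (k + 1)) = y k) ∧
      (∀ k : ℕ, ∃ m : ℤ, y k - (m : ℝ) ∈ J') ∧
      Tendsto (fun n : ℕ => (f^[n] (y 0) - y 0) / (n : ℝ)) atTop
        (𝓝 (sInf (rotationSet f))) ∧
      Tendsto (fun n : ℕ => (y 0 - y n) / (n : ℝ)) atTop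
        (𝓝 (sInf (rotationSet f))) := by
  obtain ⟨⟨hcont, hadd⟩, hzy, hyz, hanti, hmono⟩ := hf
  have hint : ∀ (m : ℤ) (x : ℝ), f (x + m) = f x + m := map_add_int' hadd
  -- basic facts about w₀'
  have hfz : f y₀ < f z₀ := hanti ⟨le_refl z₀, hzy.le⟩ ⟨hzy.le, le_refl y₀⟩ hzy
  have hfz1 : f (z₀ + 1) = f z₀ + 1 := hadd z₀
  have hSne : ({x ∈ Set.Icc y₀ (z₀ + 1) | f x = f y₀ + 1}).Nonempty := by
    have h1 : f y₀ + 1 ∈ Set.Icc (f y₀) (f (z₀ + 1)) := by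
      constructor
      · linarith
      · rw [hfz1]; linarith
    obtain ⟨x, hx, hfx⟩ := intermediate_value_Icc hyz.le hcont.continuousOn h1
    exact ⟨x, hx, hfx⟩
  have hSclosed : IsClosed {x ∈ Set.Icc y₀ (z₀ + 1) | f x = f y₀ + 1} := by
    have : {x ∈ Set.Icc y₀ (z₀ + 1) | f x = f y₀ + 1}
        = Set.Icc y₀ (z₀ + 1) ∩ {x | f x = f y₀ + 1} := rfl
    rw [this]
    exact isClosed_Icc.inter (isClosed_eq hcont continuous_const)
  have hSbdd : BddBelow {x ∈ Set.Icc y₀ (z₀ + 1) | f x = f y₀ + 1} :=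
    ⟨y₀, fun x hx => hx.1.1⟩
  have hwS : w₀' ∈ {x ∈ Set.Icc y₀ (z₀ + 1) | f x = f y₀ + 1} := by
    rw [hw₀']; exact hSclosed.csInf_mem hSne hSbdd
  have hfw : f w₀' = f y₀ + 1 := hwS.2
  have hwz : w₀' ≤ z₀ + 1 := hwS.1.2
  have hyw : y₀ < w₀' := by
    rcases lt_or_eq_of_le hwS.1.1 with h | h
    · exact h
    · exfalso; rw [← h] at hfw; linarith
  -- f is bounded above f x on [x, ∞) for x ∈ J'
  have L1 : ∀ s ∈ Set.Icc y₀ (y₀ + 1), f y₀ ≤ f s := by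
    intro s hs
    rcases le_or_gt s (z₀ + 1) with h | h
    · exact hmono.monotoneOn ⟨le_refl y₀, by linarith⟩ ⟨hs.1, h⟩ hs.1
    · have hs1 : s - 1 ∈ Set.Icc z₀ y₀ := ⟨by linarith, by linarith [hs.2]⟩
      have h2 : f y₀ ≤ f (s - 1) :=
        hanti.antitoneOn hs1 ⟨hzy.le, le_refl y₀⟩ hs1.2
      have h3 := hadd (s - 1); rw [sub_add_cancel] at h3
      linarith
  have L2 : ∀ t, y₀ ≤ t → f y₀ ≤ f t := by
    intro t ht
    have hm0 : (0 : ℤ) ≤ ⌊t - y₀⌋ := Int.floor_nonneg.2 (by linarith)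
    have hfl := Int.floor_le (t - y₀)
    have hfl2 := Int.lt_floor_add_one (t - y₀)
    have hs : t - (⌊t - y₀⌋ : ℝ) ∈ Set.Icc y₀ (y₀ + 1) :=
      ⟨by linarith, by linarith⟩
    have h1 : f y₀ ≤ f (t - (⌊t - y₀⌋ : ℝ)) := L1 _ hs
    have h2 := hint ⌊t - y₀⌋ (t - (⌊t - y₀⌋ : ℝ))
    rw [sub_add_cancel] at h2
    have hm0' : (0 : ℝ) ≤ (⌊t - y₀⌋ : ℝ) := by exact_mod_cast hm0
    linarith
  have LB : ∀ x ∈ Set.Icc y₀ w₀', ∀ t, x ≤ t → f x ≤ f t := by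
    intro x hx t hxt
    have hx' : x ∈ Set.Icc y₀ (z₀ + 1) := ⟨hx.1, le_trans hx.2 hwz⟩
    have hfx_le : f x ≤ f y₀ + 1 := by
      rw [← hfw]
      exact hmono.monotoneOn hx' ⟨by linarith [hx.1, hyw], hwz⟩ hx.2
    rcases le_or_gt t (z₀ + 1) with h | h
    · exact hmono.monotoneOn hx' ⟨le_trans hx.1 hxt, h⟩ hxt
    · have hft1 : f y₀ ≤ f (t - 1) := by
        rcases le_or_gt y₀ (t - 1) with h2 | h2
        · exact L2 _ h2
        · exact hanti.antitoneOn ⟨by linarith, h2.le⟩ ⟨hzy.le, le_refl y₀⟩ h2.le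
      have h3 := hadd (t - 1); rw [sub_add_cancel] at h3
      linarith
  -- a global bound on |f t - t|
  obtain ⟨C, hC⟩ : ∃ C : ℝ, ∀ t, |f t - t| ≤ C := by
    obtain ⟨C, hC⟩ := isCompact_Icc.exists_bound_of_continuousOn
      (s := Set.Icc (0:ℝ) 1) ((hcont.sub continuous_id).continuousOn)
    refine ⟨C, fun t => ?_⟩
    have hfl := Int.floor_le t
    have hfl2 := Int.lt_floor_add_one t
    have hs : t - (⌊t⌋ : ℝ) ∈ Set.Icc (0:ℝ) 1 := ⟨by linarith, by linarith⟩
    have h1 := hC _ hs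
    rw [Real.norm_eq_abs] at h1
    have h2 := hint ⌊t⌋ (t - (⌊t⌋ : ℝ))
    rw [sub_add_cancel] at h2
    have : f t - t = f (t - (⌊t⌋ : ℝ)) - (t - (⌊t⌋ : ℝ)) := by linarith
    rw [this]; exact h1
  -- the lower monotone truncation g
  set g : ℝ → ℝ := fun x => sInf (f '' Set.Ici x) with hgdef
  have hgbdd : ∀ x : ℝ, BddBelow (f '' Set.Ici x) := by
    intro x
    refine ⟨x - C, ?_⟩
    rintro v ⟨t, ht, rfl⟩
    have h1 := (abs_le.1 (hC t)).1
    have : x - C ≤ t - C := by linarith [Set.mem_Ici.1 ht]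
    linarith
  have hgne : ∀ x : ℝ, (f '' Set.Ici x).Nonempty := fun x => ⟨f x, x, le_refl x, rfl⟩
  have hg_le : ∀ x, g x ≤ f x := fun x => csInf_le (hgbdd x) ⟨x, le_refl x, rfl⟩
  have hg_mono : Monotone g := by
    intro a b hab
    refine le_csInf (hgne b) ?_
    rintro v ⟨t, ht, rfl⟩
    exact csInf_le (hgbdd a) ⟨t, le_trans hab ht, rfl⟩
  have hg_add : ∀ x, g (x + 1) = g x + 1 := by
    intro x
    have h1 : g (x + 1) - 1 ≤ g x := by
      refine le_csInf (hgne x) ?_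
      rintro v ⟨t, ht, rfl⟩
      have h2 : g (x + 1) ≤ f (t + 1) :=
        csInf_le (hgbdd _) ⟨t + 1, by simp only [Set.mem_Ici] at ht ⊢; linarith, rfl⟩
      rw [hadd t] at h2; linarith
    have h2 : g x + 1 ≤ g (x + 1) := by
      refine le_csInf (hgne (x + 1)) ?_
      rintro v ⟨t, ht, rfl⟩
      have h3 : g x ≤ f (t - 1) :=
        csInf_le (hgbdd x) ⟨t - 1, by simp only [Set.mem_Ici] at ht ⊢; linarith, rfl⟩
      have h4 := hadd (t - 1); rw [sub_add_cancel] at h4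
      linarith
    linarith
  have hg_int : ∀ (m : ℤ) (x : ℝ), g (x + m) = g x + m := map_add_int' hg_add
  have hgJ : ∀ x ∈ Set.Icc y₀ w₀', g x = f x := by
    intro x hx
    refine le_antisymm (hg_le x) (le_csInf (hgne x) ?_)
    rintro v ⟨t, ht, rfl⟩
    exact LB x hx t ht
  have hgK : ∀ x : ℝ, (∃ m : ℤ, x - (m : ℝ) ∈ Set.Icc y₀ w₀') → g x = f x := by
    rintro x ⟨m, hm⟩
    have h1 := hg_int m (x - (m : ℝ))
    have h2 := hint m (x - (m : ℝ))
    rw [sub_add_cancel] at h1 h2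
    rw [h1, h2, hgJ _ hm]
  -- preimages inside the climbing interval translates
  have hpre : ∀ v : ℝ, ∃ x : ℝ, (∃ m : ℤ, x - (m : ℝ) ∈ Set.Icc y₀ w₀') ∧ f x = v := by
    intro v
    have hceil1 := Int.ceil_lt_add_one (v - f y₀ - 1)
    have hceil2 := Int.le_ceil (v - f y₀ - 1)
    have h1 : v - (⌈v - f y₀ - 1⌉ : ℝ) ∈ Set.Icc (f y₀) (f w₀') := by
      rw [hfw]
      constructor
      · linarith
      · linarith
    obtain ⟨s, hs, hfs⟩ := intermediate_value_Icc hyw.le hcont.continuousOn h1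
    refine ⟨s + (⌈v - f y₀ - 1⌉ : ℝ), ⟨⌈v - f y₀ - 1⌉, by simpa using hs⟩, ?_⟩
    rw [hint _ s, hfs]; ring
  have hg_surj : Function.Surjective g := by
    intro v
    obtain ⟨x, hxK, hfx⟩ := hpre v
    exact ⟨x, (hgK x hxK).trans hfx⟩
  have hg_cont : Continuous g := hg_mono.continuous_of_surjective hg_surj
  -- g as a CircleDeg1Lift
  set G : CircleDeg1Lift := ⟨⟨g, hg_mono⟩, hg_add⟩ with hGdef
  have hGcoe : ∀ x, G x = g x := fun _ => rfl
  set τ : ℝ := G.translationNumber with hτ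
  have hGpow : ∀ (n : ℕ) (x : ℝ), (G ^ n) x = g^[n] x := by
    intro n x
    rw [CircleDeg1Lift.coe_pow]
    rfl
  -- the set K of translates of J'
  set K : Set ℝ := ⋃ m : ℤ, Set.Icc (y₀ + (m : ℝ)) (w₀' + (m : ℝ)) with hKdef
  have hKmem : ∀ x : ℝ, x ∈ K ↔ ∃ m : ℤ, x - (m : ℝ) ∈ Set.Icc y₀ w₀' := by
    intro x
    simp only [hKdef, Set.mem_iUnion, Set.mem_Icc]
    constructor
    · rintro ⟨m, h1, h2⟩; exact ⟨m, by linarith, by linarith⟩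
    · rintro ⟨m, h1, h2⟩; exact ⟨m, by linarith, by linarith⟩
  have hJK : ∀ x ∈ Set.Icc y₀ w₀', x ∈ K := by
    intro x hx
    rw [hKmem]
    exact ⟨0, by simpa using hx⟩
  have hKtrans : ∀ (x : ℝ) (mm : ℤ), x ∈ K → x + (mm : ℝ) ∈ K := by
    intro x mm hx
    rw [hKmem] at hx ⊢
    obtain ⟨m, hm⟩ := hx
    refine ⟨m + mm, ?_⟩
    have : x + (mm : ℝ) - ((m + mm : ℤ) : ℝ) = x - (m : ℝ) := by push_cast; ring
    rw [this]; exact hm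
  have hKcl : IsClosed K := by
    rw [hKdef]
    apply LocallyFinite.isClosed_iUnion
    · intro x
      refine ⟨Set.Ioo (x - 1) (x + 1), Ioo_mem_nhds (by linarith) (by linarith), ?_⟩
      apply Set.Finite.subset (Set.finite_Icc (⌈x - 1 - w₀'⌉) (⌊x + 1 - y₀⌋))
      rintro m ⟨t, ⟨ht1, ht2⟩, ht3, ht4⟩
      constructor
      · exact Int.ceil_le.2 (by linarith)
      · exact Int.le_floor.2 (by linarith)
    · intro m; exact isClosed_Icc
  -- iterates of f and g agree along orbits that stay in K
  have hfgK : ∀ (x : ℝ) (n : ℕ), (∀ k ≤ n, f^[k] x ∈ K) →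
      ∀ k ≤ n, g^[k] x = f^[k] x := by
    intro x n hx k
    induction k with
    | zero => intro _; rfl
    | succ k ih =>
      intro hk
      have hk' : k ≤ n := le_trans (Nat.le_succ k) hk
      rw [Function.iterate_succ_apply', Function.iterate_succ_apply', ih hk']
      exact hgK _ ((hKmem _).1 (hx k hk'))
  -- choice of preimages
  choose P hPK hPf using hpre
  have hPmem : ∀ v, P v ∈ K := fun v => (hKmem _).2 (hPK v)
  have hchain : ∀ (p : ℝ) (j k : ℕ), f^[k] (P^[k + j] p) = P^[j] p := by
    intro p j k
    induction k with
    | zero => simp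
    | succ k ih =>
      have h1 : P^[k + 1 + j] p = P (P^[k + j] p) := by
        rw [show k + 1 + j = (k + j) + 1 by ring, Function.iterate_succ_apply']
      rw [h1, Function.iterate_succ_apply, hPf, ih]
  have hchain0 : ∀ (p : ℝ) (n : ℕ), f^[n] (P^[n] p) = p := by
    intro p n
    have := hchain p 0 n
    simpa using this
  -- the nested compact sets
  set A : ℕ → Set ℝ := fun n =>
    Set.Icc y₀ w₀' ∩ ⋂ k, ⋂ (_ : k ≤ n), (g^[k]) ⁻¹' K with hAdef
  have hAcl : ∀ n, IsClosed (A n) :=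
    fun n => isClosed_Icc.inter (isClosed_iInter fun k =>
      isClosed_iInter fun _ => hKcl.preimage (hg_cont.iterate k))
  have hAsub : ∀ n, A n ⊆ Set.Icc y₀ w₀' := fun n => Set.inter_subset_left
  have hAdec : ∀ n, A (n + 1) ⊆ A n := by
    intro n x hx
    obtain ⟨hx1, hx2⟩ := hx
    simp only [Set.mem_iInter] at hx2
    refine ⟨hx1, ?_⟩
    simp only [Set.mem_iInter]
    intro k hk
    exact hx2 k (le_trans hk (Nat.le_succ n))
  have hAne : ∀ n, (A n).Nonempty := by
    intro n
    -- start from the n-fold preimage of y₀ and translate it back into J'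
    have hqK : ∀ j : ℕ, P^[j] y₀ ∈ K := by
      intro j
      cases j with
      | zero => exact hJK y₀ ⟨le_refl y₀, hyw.le⟩
      | succ j => rw [Function.iterate_succ_apply']; exact hPmem _
    obtain ⟨m, hm⟩ := (hKmem _).1 (hqK n)
    set x : ℝ := P^[n] y₀ - (m : ℝ) with hxdef
    have hxJ : x ∈ Set.Icc y₀ w₀' := hm
    have hfkx : ∀ k ≤ n, f^[k] x ∈ K := by
      intro k hk
      have h1 : f^[k] (P^[n] y₀) = P^[n - k] y₀ := by
        have := hchain y₀ (n - k) k
        rwa [show k + (n - k) = n from Nat.add_sub_cancel' hk] at this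
      have h2 : f^[k] x = f^[k] (P^[n] y₀) + ((-m : ℤ) : ℝ) := by
        have h3 := iterate_map_add_int' hadd k (-m) (P^[n] y₀)
        have h4 : P^[n] y₀ + ((-m : ℤ) : ℝ) = x := by rw [hxdef]; push_cast; ring
        rw [← h4, h3]
      rw [h2, h1]
      exact hKtrans _ _ (hqK (n - k))
    have hgkx : ∀ k ≤ n, g^[k] x ∈ K := by
      intro k hk
      rw [hfgK x n hfkx k hk]
      exact hfkx k hk
    refine ⟨x, hxJ, ?_⟩
    simp only [Set.mem_iInter]
    intro k hk
    exact hgkx k hk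
  have hA0c : IsCompact (A 0) :=
    IsCompact.of_isClosed_subset isCompact_Icc (hAcl 0) (hAsub 0)
  obtain ⟨yt, hyt⟩ := IsCompact.nonempty_iInter_of_sequence_nonempty_isCompact_isClosed
    A hAdec hAne hA0c hAcl
  have hytA : ∀ n, yt ∈ A n := by
    intro n
    exact Set.mem_iInter.1 hyt n
  have hytJ : yt ∈ Set.Icc y₀ w₀' := (hytA 0).1
  have hytK : ∀ k : ℕ, g^[k] yt ∈ K := by
    intro k
    have := (hytA k).2
    simp only [Set.mem_iInter] at this
    exact this k (le_refl k)
  have hytfg : ∀ k : ℕ, f^[k] yt = g^[k] yt := by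
    intro k
    induction k with
    | zero => rfl
    | succ k ih =>
      rw [Function.iterate_succ_apply', Function.iterate_succ_apply', ih]
      exact (hgK _ ((hKmem _).1 (hytK k))).symm
  -- first limit
  have hT1 : Tendsto (fun n : ℕ => (f^[n] yt - yt) / (n : ℝ)) atTop (𝓝 τ) := by
    refine (G.tendsto_translationNumber yt).congr fun n => ?_
    rw [hGpow n yt, ← hytfg n]
  -- rotation set identification
  have hiterbd : ∀ (x : ℝ) (n : ℕ), |f^[n] x - x| ≤ (n : ℝ) * C := by
    intro x n
    induction n with
    | zero => simp
    | succ n ih =>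
      have h1 : |f^[n + 1] x - x| ≤ |f^[n + 1] x - f^[n] x| + |f^[n] x - x| :=
        abs_sub_le _ _ _
      have h2 : |f^[n + 1] x - f^[n] x| ≤ C := by
        rw [Function.iterate_succ_apply']
        exact hC _
      push_cast
      have := hC x
      nlinarith [abs_nonneg (f x - x)]
  have hmemρ : τ ∈ rotationSet f := ⟨yt, hT1.limsup_eq⟩
  have hlbρ : ∀ r ∈ rotationSet f, τ ≤ r := by
    rintro r ⟨x, hx⟩
    have hu : Tendsto (fun n : ℕ => (g^[n] x - x) / (n : ℝ)) atTop (𝓝 τ) :=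
      (G.tendsto_translationNumber x).congr fun n => by rw [hGpow n x]
    have hgle : ∀ n : ℕ, g^[n] x ≤ f^[n] x := by
      intro n
      induction n with
      | zero => exact le_refl x
      | succ n ih =>
        rw [Function.iterate_succ_apply', Function.iterate_succ_apply']
        exact le_trans (hg_mono ih) (hg_le _)
    have hle : ∀ n : ℕ, (g^[n] x - x) / (n : ℝ) ≤ (f^[n] x - x) / (n : ℝ) := by
      intro n
      rcases Nat.eq_zero_or_pos n with h | h
      · subst h; simp
      · have hn : (0 : ℝ) < n := by exact_mod_cast h
        exact (div_le_div_iff_of_pos_right hn).2 (by linarith [hgle n])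
    have hbound : IsBoundedUnder (· ≤ ·) atTop (fun n : ℕ => (f^[n] x - x) / (n : ℝ)) := by
      refine isBoundedUnder_of ⟨max C 0, fun n => ?_⟩
      rcases Nat.eq_zero_or_pos n with h | h
      · subst h; simp [le_max_right]
      · have hn : (0 : ℝ) < n := by exact_mod_cast h
        have h1 : f^[n] x - x ≤ (n : ℝ) * C := le_trans (le_abs_self _) (hiterbd x n)
        have h2 : (f^[n] x - x) / (n : ℝ) ≤ C := by
          rw [div_le_iff₀ hn]; linarith
        exact le_trans h2 (le_max_left _ _)
    have hcob : IsCoboundedUnder (· ≤ ·) atTop (fun n : ℕ => (g^[n] x - x) / (n : ℝ)) :=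
      hu.isCoboundedUnder_le
    have hll := limsup_le_limsup (Eventually.of_forall hle) hcob hbound
    rw [hu.limsup_eq] at hll
    rw [← hx]
    exact hll
  have hsInf : sInf (rotationSet f) = τ :=
    le_antisymm (csInf_le ⟨τ, hlbρ⟩ hmemρ) (le_csInf ⟨τ, hmemρ⟩ hlbρ)
  -- the backward orbit
  set y : ℕ → ℝ := fun n => P^[n] yt with hydef
  have hy0 : y 0 = yt := rfl
  have hyK : ∀ j, y j ∈ K := by
    intro j
    cases j with
    | zero => exact hJK yt hytJ
    | succ j =>
      show P^[j + 1] yt ∈ K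
      rw [Function.iterate_succ_apply']
      exact hPmem _
  have hfyk : ∀ n k : ℕ, k ≤ n → f^[k] (y n) ∈ K := by
    intro n k hk
    have h1 : f^[k] (y n) = y (n - k) := by
      show f^[k] (P^[n] yt) = P^[n - k] yt
      have := hchain yt (n - k) k
      rwa [show k + (n - k) = n from Nat.add_sub_cancel' hk] at this
    rw [h1]
    exact hyK _
  have hGyn : ∀ n : ℕ, (G ^ n) (y n) = y 0 := by
    intro n
    rw [hGpow, hfgK (y n) n (hfyk n) n (le_refl n)]
    show f^[n] (P^[n] yt) = yt
    exact hchain0 yt n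
  -- uniform displacement bounds for G ^ n
  have hub : ∀ (n : ℕ) (x : ℝ), (G ^ n) x < x + (n : ℝ) * τ + 1 := by
    intro n x
    have h1 := (G ^ n).map_lt_add_translationNumber_add_one x
    rwa [G.translationNumber_pow n] at h1
  have hlb2 : ∀ (n : ℕ) (x : ℝ), x + (n : ℝ) * τ - 1 < (G ^ n) x := by
    intro n x
    set F : CircleDeg1Lift := G ^ n with hF
    have h2 : ((⌈F.translationNumber⌉ - 1 : ℤ) : ℝ) < F.translationNumber := by
      push_cast
      linarith [Int.ceil_lt_add_one F.translationNumber]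
    have h3 := F.lt_map_of_int_lt_translationNumber h2 x
    have h4 : F.translationNumber - 1 ≤ ((⌈F.translationNumber⌉ - 1 : ℤ) : ℝ) := by
      push_cast
      linarith [Int.le_ceil F.translationNumber]
    have h5 : F.translationNumber = (n : ℝ) * τ := G.translationNumber_pow n
    have h6 : x + (F.translationNumber - 1) ≤ x + ((⌈F.translationNumber⌉ - 1 : ℤ) : ℝ) := by
      linarith
    calc x + (n : ℝ) * τ - 1 = x + (F.translationNumber - 1) := by rw [h5]; ring
    _ ≤ x + ((⌈F.translationNumber⌉ - 1 : ℤ) : ℝ) := h6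
    _ < F x := h3
  have hT2 : Tendsto (fun n : ℕ => (y 0 - y n) / (n : ℝ)) atTop (𝓝 τ) := by
    have key : ∀ n : ℕ, 1 ≤ n → |(y 0 - y n) / (n : ℝ) - τ| ≤ 1 / (n : ℝ) := by
      intro n hn
      have hp : (0 : ℝ) < n := by exact_mod_cast hn
      have h1 := hub n (y n)
      have h2 := hlb2 n (y n)
      rw [hGyn n] at h1 h2
      have h3 : |(y 0 - y n) - (n : ℝ) * τ| ≤ 1 := abs_le.2 ⟨by linarith, by linarith⟩
      have h4 : (y 0 - y n) / (n : ℝ) - τ = ((y 0 - y n) - (n : ℝ) * τ) / (n : ℝ) := by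
        field_simp
      rw [h4, abs_div, abs_of_pos hp]
      exact (div_le_div_iff_of_pos_right hp).2 h3
    rw [tendsto_iff_dist_tendsto_zero]
    have h0 : Tendsto (fun n : ℕ => (1 : ℝ) / (n : ℝ)) atTop (𝓝 0) :=
      tendsto_one_div_atTop_nhds_zero_nat
    refine squeeze_zero' (Eventually.of_forall fun n => dist_nonneg)
      (eventually_atTop.2 ⟨1, fun n hn => ?_⟩) h0
    rw [Real.dist_eq]
    exact key n hn
  -- conclusion
  refine ⟨y, ?_, ?_, ?_, ?_, ?_⟩
  · rw [hJ', hy0]; exact hytJ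
  · intro k
    show f (P^[k + 1] yt) = P^[k] yt
    rw [Function.iterate_succ_apply', hPf]
  · intro k
    rw [hJ']
    exact (hKmem _).1 (hyK k)
  · rw [hsInf, hy0]; exact hT1
  · rw [hsInf]; exact hT2
end

section
/- Let f : ℝ → ℝ be the lift of a circle endomorphism with two turns, with turning data z₀ < y₀ < z₀ + 1, and let J = [w₀, z₀+1] be its efficient climbing interval. Then f(w₀) = f(z₀), f(z₀+1) = f(z₀) + 1, and the image f(J) equals the interval [f(z₀), f(z₀)+1], which has length 1. Consequently ⋃_{m∈ℤ} f(J + m) = ℝ; in particular, for every z ∈ ℝ there exist m ∈ ℤ and y ∈ J + m with f(y) = z. -/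
open Filter Topology

theorem image_of_efficient_climbing_interval
    (f : ℝ → ℝ) (z₀ y₀ : ℝ) (hf : IsTwoTurnsLift f z₀ y₀)
    (w₀ : ℝ) (hw₀ : w₀ = sSup {x ∈ Set.Icc z₀ (z₀ + 1) | f x = f z₀})
    (J : Set ℝ) (hJ : J = Set.Icc w₀ (z₀ + 1)) :
    f w₀ = f z₀ ∧
    f (z₀ + 1) = f z₀ + 1 ∧
    f '' J = Set.Icc (f z₀) (f z₀ + 1) ∧
    (⋃ m : ℤ, f '' ((fun x => x + (m : ℝ)) '' J)) = Set.univ ∧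
    (∀ z : ℝ, ∃ m : ℤ, ∃ y : ℝ, y - (m : ℝ) ∈ J ∧ f y = z) := by
  obtain ⟨⟨hcont, hper⟩, hzy, hyz, hanti, hmono⟩ := hf
  set S : Set ℝ := {x ∈ Set.Icc z₀ (z₀ + 1) | f x = f z₀} with hS
  have hz1 : z₀ ≤ z₀ + 1 := by linarith
  have hSne : S.Nonempty := ⟨z₀, ⟨⟨le_refl _, hz1⟩, rfl⟩⟩
  have hSbdd : BddAbove S := ⟨z₀ + 1, fun x hx => hx.1.2⟩
  have hSclosed : IsClosed S := isClosed_Icc.inter (isClosed_eq hcont continuous_const)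
  have hw₀S : w₀ ∈ S := hw₀ ▸ hSclosed.csSup_mem hSne hSbdd
  have h1 : f w₀ = f z₀ := hw₀S.2
  have h2 : f (z₀ + 1) = f z₀ + 1 := hper z₀
  -- f y₀ < f z₀
  have hfy : f y₀ < f z₀ := hanti ⟨le_refl _, hzy.le⟩ ⟨hzy.le, le_refl _⟩ hzy
  -- there is x* in [y₀, z₀+1] with f x* = f z₀
  have hiv := intermediate_value_Icc hyz.le (hcont.continuousOn (s := Set.Icc y₀ (z₀ + 1)))
  obtain ⟨x', hx'mem, hx'⟩ := hiv ⟨hfy.le, by rw [h2]; linarith⟩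
  have hx'S : x' ∈ S := ⟨⟨hzy.le.trans hx'mem.1, hx'mem.2⟩, hx'⟩
  have hyw : y₀ ≤ w₀ := hx'mem.1.trans (hw₀ ▸ le_csSup hSbdd hx'S)
  have hww : w₀ ≤ z₀ + 1 := hw₀S.1.2
  -- monotone on J
  have hmono' : MonotoneOn f (Set.Icc w₀ (z₀ + 1)) :=
    (hmono.mono (Set.Icc_subset_Icc hyw (le_refl _))).monotoneOn
  have h3 : f '' J = Set.Icc (f z₀) (f z₀ + 1) := by
    apply Set.Subset.antisymm
    · rintro _ ⟨x, hx, rfl⟩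
      rw [hJ] at hx
      constructor
      · rw [← h1]; exact hmono' ⟨le_refl _, hww⟩ hx hx.1
      · rw [← h2]; exact hmono' hx ⟨hww, le_refl _⟩ hx.2
    · have := intermediate_value_Icc hww (hcont.continuousOn (s := Set.Icc w₀ (z₀ + 1)))
      rw [h1, h2] at this
      rw [hJ]; exact this
  have hlift : ∀ (m : ℤ) (x : ℝ), f (x + m) = f x + m := by
    intro m
    induction m using Int.induction_on with
    | zero => intro x; simp
    | succ i ih =>
      intro x
      have : (x : ℝ) + ((i : ℤ) + 1 : ℤ) = (x + i) + 1 := by push_cast; ring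
      rw [this, hper]; push_cast at ih ⊢; rw [ih]; ring
    | pred i ih =>
      intro x
      have e1 : (x : ℝ) + ((-i : ℤ) : ℝ) = (x + (-(i : ℤ) - 1 : ℤ)) + 1 := by push_cast; ring
      have := hper (x + ((-(i : ℤ) - 1 : ℤ) : ℝ))
      rw [← e1] at this
      rw [ih] at this
      have : f (x + ((-(i : ℤ) - 1 : ℤ) : ℝ)) = f x + ((-i : ℤ) : ℝ) - 1 := by linarith
      rw [this]; push_cast; ring
  have h5 : ∀ z : ℝ, ∃ m : ℤ, ∃ y : ℝ, y - (m : ℝ) ∈ J ∧ f y = z := by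
    intro z
    refine ⟨⌊z - f z₀⌋, ?_⟩
    set m : ℤ := ⌊z - f z₀⌋
    have hm1 : (m : ℝ) ≤ z - f z₀ := Int.floor_le _
    have hm2 : z - f z₀ < m + 1 := Int.lt_floor_add_one _
    have hmem : z - m ∈ Set.Icc (f z₀) (f z₀ + 1) := ⟨by linarith, by linarith⟩
    rw [← h3] at hmem
    obtain ⟨u, hu, hfu⟩ := hmem
    refine ⟨u + m, by simpa using hu, ?_⟩
    rw [hlift m u, hfu]; ring
  refine ⟨h1, h2, h3, ?_, h5⟩
  ext z
  simp only [Set.mem_iUnion, Set.mem_univ, iff_true, Set.mem_image]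
  obtain ⟨m, y, hy, hfy'⟩ := h5 z
  exact ⟨m, y, ⟨y - m, hy, by ring⟩, hfy'⟩
end

section
/- Let f : ℝ → ℝ be the lift of a circle endomorphism with two turns, with turning data z₀ < y₀ < z₀ + 1, and let w₀ = sup{ x ∈ [z₀, z₀+1] : f(x) = f(z₀) }. Then there is a well-defined map g : ℝ → ℝ (the water pouring map of f) satisfying g(x) = f(z₀) for x ∈ [z₀, w₀], g(x) = f(x) for x ∈ [w₀, z₀+1], and g(x+1) = g(x) + 1 for all x ∈ ℝ; moreover g is continuous and monotone nondecreasing on ℝ. -/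
open Filter Topology

lemma int_shift {h : ℝ → ℝ} (H : ∀ x, h (x + 1) = h x + 1) :
    ∀ (k : ℤ) (x : ℝ), h (x + k) = h x + k := by
  intro k x
  induction k using Int.induction_on with
  | zero => simp
  | succ i ih =>
      have : x + ((i : ℤ) + 1 : ℤ) = (x + (i : ℤ)) + 1 := by push_cast; ring
      rw [this, H, ih]; push_cast; ring
  | pred i ih =>
      have h1 := H (x + (-(i : ℤ) - 1 : ℤ))
      have e : x + (-(i : ℤ) - 1 : ℤ) + 1 = x + (-(i : ℤ) : ℤ) := by push_cast; ring
      rw [e, ih] at h1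
      push_cast at h1 ⊢
      linarith

theorem water_pouring_map_exists
    (f : ℝ → ℝ) (z₀ y₀ : ℝ) (hf : IsTwoTurnsLift f z₀ y₀)
    (w₀ : ℝ) (hw₀ : w₀ = sSup {x ∈ Set.Icc z₀ (z₀ + 1) | f x = f z₀}) :
    ∃ g : ℝ → ℝ,
      (∀ x ∈ Set.Icc z₀ w₀, g x = f z₀) ∧
      (∀ x ∈ Set.Icc w₀ (z₀ + 1), g x = f x) ∧
      (∀ x : ℝ, g (x + 1) = g x + 1) ∧
      Continuous g ∧ Monotone g ∧
      (∀ g' : ℝ → ℝ,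
        (∀ x ∈ Set.Icc z₀ w₀, g' x = f z₀) →
        (∀ x ∈ Set.Icc w₀ (z₀ + 1), g' x = f x) →
        (∀ x : ℝ, g' (x + 1) = g' x + 1) → g' = g) := by
  obtain ⟨⟨hcont, hdeg⟩, hzy, hyz, hanti, hmono⟩ := hf
  set c := f z₀ with hc
  have hz1 : f (z₀ + 1) = c + 1 := hdeg z₀
  have hyltz1 : y₀ < z₀ + 1 := hyz
  have hfy_lt : f y₀ < c := hanti ⟨le_refl _, le_of_lt hzy⟩ ⟨le_of_lt hzy, le_refl _⟩ hzy
  -- find the unique point w in [y₀, z₀+1] with f w = c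
  have hcc : c ∈ Set.Icc (f y₀) (f (z₀ + 1)) := ⟨le_of_lt hfy_lt, by rw [hz1]; linarith⟩
  obtain ⟨w, hwmem, hfw⟩ := intermediate_value_Icc (le_of_lt hyltz1)
    (hcont.continuousOn) hcc
  -- w₀ = w
  have hww : w₀ = w := by
    rw [hw₀]
    apply le_antisymm
    · apply csSup_le
      · exact ⟨z₀, ⟨⟨le_refl _, by linarith⟩, rfl⟩⟩
      rintro x ⟨⟨hx1, hx2⟩, hfx⟩
      by_cases hxy : x ≤ y₀
      · linarith [hwmem.1]
      · push_neg at hxy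
        have : x = w := by
          by_contra hne
          rcases lt_or_gt_of_ne hne with h | h
          · have := hmono ⟨le_of_lt hxy, hx2⟩ ⟨hwmem.1, hwmem.2⟩ h
            rw [hfx, hfw] at this; exact lt_irrefl _ this
          · have := hmono ⟨hwmem.1, hwmem.2⟩ ⟨le_of_lt hxy, hx2⟩ h
            rw [hfx, hfw] at this; exact lt_irrefl _ this
        linarith [this.le]
    · apply le_csSup
      · refine ⟨z₀ + 1, ?_⟩
        rintro x ⟨⟨_, hx2⟩, _⟩; exact hx2
      · exact ⟨⟨by linarith [hwmem.1], hwmem.2⟩, hfw⟩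
  have hfw₀ : f w₀ = c := by rw [hww]; exact hfw
  have hw₀mem : y₀ ≤ w₀ ∧ w₀ ≤ z₀ + 1 := by rw [hww]; exact ⟨hwmem.1, hwmem.2⟩
  have hw₀lt : w₀ < z₀ + 1 := by
    rcases lt_or_eq_of_le hw₀mem.2 with h | h
    · exact h
    · exfalso; rw [h, hz1] at hfw₀; linarith
  have hw₀gt : y₀ < w₀ := by
    rcases lt_or_eq_of_le hw₀mem.1 with h | h
    · exact h
    · exfalso; rw [← h] at hfw₀; linarith
  have hzw₀ : z₀ < w₀ := lt_trans hzy hw₀gt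
  -- f ≤ c on [z₀, w₀]
  have hfle : ∀ x ∈ Set.Icc z₀ w₀, f x ≤ c := by
    rintro x ⟨hx1, hx2⟩
    by_cases hxy : x ≤ y₀
    · exact hanti.antitoneOn ⟨le_refl _, le_of_lt hzy⟩ ⟨hx1, hxy⟩ hx1
    · push_neg at hxy
      have := hmono.monotoneOn ⟨le_of_lt hxy, by linarith⟩ ⟨le_of_lt hw₀gt, hw₀mem.2⟩ hx2
      linarith [hfw₀ ▸ this]
  -- define g
  set g : ℝ → ℝ := fun x => max (f x) (c + ⌊x - z₀⌋) with hg
  have hgdef : ∀ x : ℝ, g x = max (f x) (c + ⌊x - z₀⌋) := fun _ => rfl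
  have hg1 : ∀ x ∈ Set.Icc z₀ w₀, g x = c := by
    rintro x ⟨hx1, hx2⟩
    have hfl : ⌊x - z₀⌋ = 0 := by
      apply Int.floor_eq_zero_iff.2
      rw [Set.mem_Ico]
      constructor <;> linarith
    rw [hgdef, hfl]
    simp only [Int.cast_zero, add_zero]
    exact max_eq_right (hfle x ⟨hx1, hx2⟩)
  have hg2 : ∀ x ∈ Set.Icc w₀ (z₀ + 1), g x = f x := by
    rintro x ⟨hx1, hx2⟩
    rcases lt_or_eq_of_le hx2 with h | h
    · have hfl : ⌊x - z₀⌋ = 0 := by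
        apply Int.floor_eq_zero_iff.2
        rw [Set.mem_Ico]
        constructor <;> linarith
      have hge : c ≤ f x := by
        have := hmono.monotoneOn ⟨le_of_lt hw₀gt, hw₀mem.2⟩
          ⟨by linarith [hw₀gt], le_of_lt h⟩ hx1
        linarith [hfw₀ ▸ this]
      rw [hgdef, hfl]
      simp only [Int.cast_zero, add_zero]
      exact max_eq_left hge
    · subst h
      have hfl : ⌊z₀ + 1 - z₀⌋ = 1 := by norm_num
      rw [hgdef, hfl]
      simp only [Int.cast_one, hz1]
      exact max_eq_left (le_refl _)
  have hgper : ∀ x : ℝ, g (x + 1) = g x + 1 := by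
    intro x
    have hfl : ⌊x + 1 - z₀⌋ = ⌊x - z₀⌋ + 1 := by
      rw [show x + 1 - z₀ = (x - z₀) + 1 by ring, Int.floor_add_one]
    rw [hgdef, hgdef, hfl, hdeg x]
    push_cast
    rw [show c + ((⌊x - z₀⌋ : ℝ) + 1) = (c + ⌊x - z₀⌋) + 1 by ring, max_add_add_right]
  have hgshift := int_shift hgper
  -- monotone on the fundamental interval
  have hmonI : MonotoneOn g (Set.Icc z₀ (z₀ + 1)) := by
    rintro x ⟨hx1, hx2⟩ y ⟨hy1, hy2⟩ hxy
    by_cases hyw : y ≤ w₀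
    · rw [hg1 x ⟨hx1, by linarith⟩, hg1 y ⟨hy1, hyw⟩]
    · push_neg at hyw
      have hgy : g y = f y := hg2 y ⟨le_of_lt hyw, hy2⟩
      by_cases hxw : x ≤ w₀
      · rw [hg1 x ⟨hx1, hxw⟩, hgy, ← hfw₀]
        exact hmono.monotoneOn ⟨le_of_lt hw₀gt, hw₀mem.2⟩
          ⟨by linarith [hw₀gt], hy2⟩ (le_of_lt hyw)
      · push_neg at hxw
        rw [hg2 x ⟨le_of_lt hxw, hx2⟩, hgy]
        exact hmono.monotoneOn ⟨by linarith [hw₀gt], hx2⟩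
          ⟨by linarith [hw₀gt], hy2⟩ hxy
  have hgz1 : g (z₀ + 1) = g z₀ + 1 := hgper z₀
  -- global monotonicity
  have hmonog : Monotone g := by
    intro x y hxy
    set n : ℤ := ⌊x - z₀⌋ with hn
    set m : ℤ := ⌊y - z₀⌋ with hm
    have hnm : n ≤ m := Int.floor_le_floor (by linarith)
    have hxn : x - n ∈ Set.Icc z₀ (z₀ + 1) := by
      constructor
      · have := Int.floor_le (x - z₀); simp only [← hn] at this; linarith
      · have := Int.lt_floor_add_one (x - z₀); simp only [← hn] at this; linarith
    have hym : y - m ∈ Set.Icc z₀ (z₀ + 1) := by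
      constructor
      · have := Int.floor_le (y - z₀); simp only [← hm] at this; linarith
      · have := Int.lt_floor_add_one (y - z₀); simp only [← hm] at this; linarith
    have hx' : g x = g (x - n) + n := by
      have := hgshift n (x - n); rw [sub_add_cancel] at this; linarith [this]
    have hy' : g y = g (y - m) + m := by
      have := hgshift m (y - m); rw [sub_add_cancel] at this; linarith [this]
    rcases eq_or_lt_of_le hnm with h | h
    · rw [hx', hy', ← h]
      have hle : x - n ≤ y - n := by
        have : (n : ℝ) ≤ n := le_refl _; linarith
      have := hmonI hxn (h ▸ hym) hle
      linarith [this]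
    · have h1 : g (x - n) ≤ g (z₀ + 1) := hmonI hxn ⟨by linarith, le_refl _⟩ hxn.2
      have h2 : g z₀ ≤ g (y - m) := hmonI ⟨le_refl _, by linarith⟩ hym hym.1
      have hn1m : (n : ℝ) + 1 ≤ m := by exact_mod_cast h
      rw [hx', hy', hgz1] at *
      linarith
  -- surjectivity
  have hsurj : Function.Surjective g := by
    intro t
    set k : ℤ := ⌊t - c⌋ with hk
    have h1 : c ≤ t - k := by
      have := Int.floor_le (t - c); simp only [← hk] at this; linarith
    have h2 : t - k ≤ c + 1 := by
      have := Int.lt_floor_add_one (t - c); simp only [← hk] at this; linarith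
    have : t - (k : ℝ) ∈ Set.Icc (f w₀) (f (z₀ + 1)) := by
      rw [hfw₀, hz1]; exact ⟨h1, h2⟩
    obtain ⟨x, hxmem, hfx⟩ := intermediate_value_Icc (le_of_lt hw₀lt)
      hcont.continuousOn this
    refine ⟨x + k, ?_⟩
    rw [hgshift k x, hg2 x hxmem, hfx]; ring
  have hgcont : Continuous g := hmonog.continuous_of_surjective hsurj
  refine ⟨g, hg1, hg2, hgper, hgcont, hmonog, ?_⟩
  -- uniqueness
  intro g' hg1' hg2' hgper'
  have hgshift' := int_shift hgper'
  funext x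
  set n : ℤ := ⌊x - z₀⌋ with hn
  have hxn : x - n ∈ Set.Icc z₀ (z₀ + 1) := by
    constructor
    · have := Int.floor_le (x - z₀); simp only [← hn] at this; linarith
    · have := Int.lt_floor_add_one (x - z₀); simp only [← hn] at this; linarith
  have heq : g' (x - n) = g (x - n) := by
    by_cases hxw : x - n ≤ w₀
    · rw [hg1' _ ⟨hxn.1, hxw⟩, hg1 _ ⟨hxn.1, hxw⟩]
    · push_neg at hxw
      rw [hg2' _ ⟨le_of_lt hxw, hxn.2⟩, hg2 _ ⟨le_of_lt hxw, hxn.2⟩]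
  have e1 := hgshift' n (x - n)
  have e2 := hgshift n (x - n)
  rw [sub_add_cancel] at e1 e2
  rw [e1, e2, heq]
end

section
/- Let f : ℝ → ℝ be the lift of a circle endomorphism with two turns, with turning data z₀ < y₀ < z₀ + 1, let J = [w₀, z₀+1] be its efficient climbing interval, and let g be its water pouring map. Suppose (y_{−k})_{k≥0} is a sequence with f(y_{−(k+1)}) = y_{−k} and y_{−k} ∈ ⋃_{m∈ℤ} (J + m) for all k ≥ 0. Then the limit lim_{n→∞} (y_{−0} − y_{−n})/n exists and equals the translation number τ(g) := lim_{n→∞} gⁿ(0)/n of the monotone degree-one map g (which exists); in particular this backward rotation number is independent of the choice of such a backward orbit. -/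
open Filter Topology

lemma lift_add_int_s9 {h : ℝ → ℝ} (H : ∀ x : ℝ, h (x + 1) = h x + 1) (x : ℝ) (m : ℤ) :
    h (x + m) = h x + m := by
  induction m using Int.induction_on with
  | zero => simp
  | succ k ih =>
    have h1 := H (x + (k : ℝ))
    push_cast at ih ⊢
    rw [show x + ((k : ℝ) + 1) = x + (k : ℝ) + 1 by ring, h1, ih]; ring
  | pred k ih =>
    have h1 := H (x + (-(k : ℝ) - 1))
    push_cast at ih ⊢
    rw [show x + (-(k : ℝ) - 1) + 1 = x + -(k : ℝ) by ring] at h1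
    rw [show x + (-(k : ℝ) - 1) = x + (-(k : ℝ)) - 1 by ring] at h1 ⊢
    linarith

theorem backward_rotation_number_equals_translation_number
    (f : ℝ → ℝ) (z₀ y₀ : ℝ) (hf : IsTwoTurnsLift f z₀ y₀)
    (w₀ : ℝ) (hw₀ : w₀ = sSup {x ∈ Set.Icc z₀ (z₀ + 1) | f x = f z₀})
    (J : Set ℝ) (hJ : J = Set.Icc w₀ (z₀ + 1))
    (g : ℝ → ℝ)
    (hg₁ : ∀ x ∈ Set.Icc z₀ w₀, g x = f z₀)
    (hg₂ : ∀ x ∈ Set.Icc w₀ (z₀ + 1), g x = f x)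
    (hg₃ : ∀ x : ℝ, g (x + 1) = g x + 1)
    (hgc : Continuous g) (hgm : Monotone g)
    (y : ℕ → ℝ)
    (hy : ∀ k : ℕ, f (y (k + 1)) = y k)
    (hyJ : ∀ k : ℕ, ∃ m : ℤ, y k - (m : ℝ) ∈ J) :
    ∃ τ : ℝ,
      Tendsto (fun n : ℕ => g^[n] 0 / (n : ℝ)) atTop (𝓝 τ) ∧
      Tendsto (fun n : ℕ => (y 0 - y n) / (n : ℝ)) atTop (𝓝 τ) := by
  set G : CircleDeg1Lift := ⟨⟨g, hgm⟩, hg₃⟩ with hGdef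
  have hGcoe : ⇑G = g := rfl
  refine ⟨G.translationNumber, ?_, ?_⟩
  · have h := G.tendsto_translation_number₀
    refine h.congr fun n => ?_
    rw [CircleDeg1Lift.coe_pow, hGcoe]
  · -- g maps each backward orbit point to the previous one
    have key : ∀ k : ℕ, g (y (k + 1)) = y k := by
      intro k
      obtain ⟨m, hm⟩ := hyJ (k + 1)
      rw [hJ] at hm
      have h1 : g (y (k + 1) - m) = f (y (k + 1) - m) := hg₂ _ hm
      have h2 : g (y (k + 1)) = g (y (k + 1) - m) + m := by
        have := lift_add_int_s9 hg₃ (y (k + 1) - m) m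
        rw [sub_add_cancel] at this
        exact this
      have h3 : f (y (k + 1) - m) + m = f (y (k + 1)) := by
        have := lift_add_int_s9 hf.1.2 (y (k + 1) - m) m
        rw [sub_add_cancel] at this
        exact this.symm
      rw [h2, h1, h3, hy]
    have orbit : ∀ n : ℕ, g^[n] (y n) = y 0 := by
      intro n
      induction n with
      | zero => simp
      | succ n ih => rw [Function.iterate_succ_apply, key, ih]
    have bound : ∀ n : ℕ, |(y 0 - y n) - n * G.translationNumber| ≤ 2 := by
      intro n
      have h0 : dist ((G ^ n) 0) ((n : ℝ) * G.translationNumber) ≤ 1 :=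
        G.dist_pow_map_zero_mul_translationNumber_le n
      have hle : (G ^ n) (y n) ≤ (G ^ n) 0 + ⌈y n⌉ := (G ^ n).map_le_of_map_zero (y n)
      have hge : (G ^ n) 0 + ⌊y n⌋ ≤ (G ^ n) (y n) := (G ^ n).le_map_of_map_zero (y n)
      have hyeq : (G ^ n) (y n) = y 0 := by
        rw [CircleDeg1Lift.coe_pow, hGcoe, orbit]
      have c1 : (⌈y n⌉ : ℝ) < y n + 1 := Int.ceil_lt_add_one _
      have c2 : y n - 1 < (⌊y n⌋ : ℝ) := Int.sub_one_lt_floor _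
      rw [Real.dist_eq, abs_le] at h0
      rw [hyeq] at hle hge
      rw [abs_le]
      constructor <;> linarith
    rw [tendsto_iff_dist_tendsto_zero]
    refine squeeze_zero' (Eventually.of_forall fun n => dist_nonneg) ?_
      (tendsto_const_div_atTop_nhds_zero_nat 2)
    filter_upwards [eventually_gt_atTop 0] with n hn
    have hn' : (0 : ℝ) < n := by exact_mod_cast hn
    rw [Real.dist_eq, div_sub' (ne_of_gt hn'), abs_div, abs_of_pos hn',
      div_le_div_iff_of_pos_right hn']
    exact bound n
end

section
/- Let f : ℝ → ℝ be the lift of a circle endomorphism with two turns, and let g be its water pouring map. Then sup ρ(f) = τ(g), where ρ(f) = { limsup_{n→∞} (fⁿ(x) − x)/n : x ∈ ℝ } is the rotation set of f and τ(g) = lim_{n→∞} gⁿ(0)/n is the translation number of the monotone degree-one map g. -/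
open Filter Topology

lemma wp_map_add_int {f : ℝ → ℝ} (hf : ∀ x, f (x + 1) = f x + 1) (x : ℝ) (m : ℤ) :
    f (x + m) = f x + m := by
  induction m using Int.induction_on with
  | zero => simp
  | succ n ih =>
      have : x + ((n : ℤ) + 1 : ℤ) = (x + (n : ℤ)) + 1 := by push_cast; ring
      rw [this, hf, ih]; push_cast; ring
  | pred n ih =>
      have h1 : x + (-(n : ℤ) - 1 : ℤ) + 1 = x + (-(n : ℤ) : ℤ) := by push_cast; ring
      have h2 := hf (x + (-(n : ℤ) - 1 : ℤ))
      rw [h1, ih] at h2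
      push_cast at h2 ⊢
      linarith

lemma wp_iterate_add_int {f : ℝ → ℝ} (hf : ∀ x, f (x + 1) = f x + 1) (n : ℕ) (x : ℝ) (m : ℤ) :
    f^[n] (x + m) = f^[n] x + m := by
  induction n with
  | zero => simp
  | succ n ih => rw [Function.iterate_succ_apply', Function.iterate_succ_apply', ih,
      wp_map_add_int hf]

lemma wp_tendsto_of_periodic {f : ℝ → ℝ} (hf : ∀ x, f (x + 1) = f x + 1) {p : ℝ} {k : ℕ}
    (hk : 0 < k) {m : ℤ} (hp : f^[k] p = p + m) :
    Tendsto (fun n : ℕ => (f^[n] p - p) / (n : ℝ)) atTop (𝓝 ((m : ℝ) / k)) := by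
  have hkj : ∀ j : ℕ, f^[k * j] p = p + (j : ℝ) * (m : ℝ) := by
    intro j
    induction j with
    | zero => simp
    | succ j ih =>
        have h : k * (j + 1) = k + k * j := by ring
        have hc : p + (j : ℝ) * (m : ℝ) = p + (((j : ℤ) * m : ℤ) : ℝ) := by
          rw [Int.cast_mul, Int.cast_natCast]
        rw [h, Function.iterate_add_apply, ih, hc, wp_iterate_add_int hf, hp,
          Int.cast_mul, Int.cast_natCast]
        push_cast; ring
  have key : ∀ n : ℕ, f^[n] p = f^[n % k] p + ((n / k : ℕ) : ℝ) * (m : ℝ) := by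
    intro n
    conv_lhs => rw [← Nat.mod_add_div n k]
    have hc : p + ((n / k : ℕ) : ℝ) * (m : ℝ) = p + ((((n / k : ℕ) : ℤ) * m : ℤ) : ℝ) := by
      rw [Int.cast_mul, Int.cast_natCast]
    rw [Function.iterate_add_apply, hkj, hc, wp_iterate_add_int hf,
      Int.cast_mul, Int.cast_natCast]
  obtain ⟨C, hC⟩ : ∃ C : ℝ, ∀ r : ℕ, r < k → |f^[r] p - p - r * ((m : ℝ) / k)| ≤ C := by
    refine ⟨(Finset.range k).sup' (Finset.nonempty_range_iff.2 hk.ne')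
      (fun r => |f^[r] p - p - r * ((m : ℝ) / k)|), fun r hr => ?_⟩
    exact Finset.le_sup' (fun r => |f^[r] p - p - r * ((m : ℝ) / k)|) (Finset.mem_range.2 hr)
  have hk0 : (k : ℝ) ≠ 0 := Nat.cast_ne_zero.2 hk.ne'
  have hbound : ∀ n : ℕ, |f^[n] p - p - n * ((m : ℝ) / k)| ≤ C := by
    intro n
    have hnk : (n : ℝ) = ((n % k : ℕ) : ℝ) + (k : ℝ) * ((n / k : ℕ) : ℝ) := by
      exact_mod_cast congrArg (Nat.cast (R := ℝ)) (Nat.mod_add_div n k).symm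
    have h4 : f^[n] p - p - n * ((m : ℝ) / k)
        = f^[n % k] p - p - ((n % k : ℕ) : ℝ) * ((m : ℝ) / k) := by
      rw [key n, hnk]; field_simp; ring
    rw [h4]
    exact hC _ (Nat.mod_lt _ hk)
  have hzero : Tendsto (fun n : ℕ => (f^[n] p - p) / (n : ℝ) - (m : ℝ) / k) atTop (𝓝 0) := by
    apply squeeze_zero_norm' (a := fun n : ℕ => C / n)
    · filter_upwards [eventually_ge_atTop 1] with n hn
      have hn' : (0 : ℝ) < n := by exact_mod_cast hn
      have h5 : (f^[n] p - p - n * ((m : ℝ) / k)) / n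
          = (f^[n] p - p) / (n : ℝ) - (m : ℝ) / k := by
        rw [sub_div, mul_div_cancel_left₀ _ hn'.ne']
      rw [← h5]
      rw [Real.norm_eq_abs, abs_div, abs_of_pos hn']
      exact div_le_div_of_nonneg_right (hbound n) hn'.le
    · exact tendsto_const_div_atTop_nhds_zero_nat C
  have h6 := hzero.add (tendsto_const_nhds (x := (m : ℝ) / k))
  simpa using h6

/-- The water pouring map as a `CircleDeg1Lift`. -/
def wpLift (g : ℝ → ℝ) (hgm : Monotone g) (hg₃ : ∀ x : ℝ, g (x + 1) = g x + 1) :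
    CircleDeg1Lift := ⟨⟨g, hgm⟩, hg₃⟩

@[simp] lemma wpLift_coe (g : ℝ → ℝ) (hgm : Monotone g) (hg₃ : ∀ x : ℝ, g (x + 1) = g x + 1) :
    ⇑(wpLift g hgm hg₃) = g := rfl

theorem sup_rotation_set_eq_translation_number_of_water_pouring
    (f : ℝ → ℝ) (z₀ y₀ : ℝ) (hf : IsTwoTurnsLift f z₀ y₀)
    (w₀ : ℝ) (hw₀ : w₀ = sSup {x ∈ Set.Icc z₀ (z₀ + 1) | f x = f z₀})
    (g : ℝ → ℝ)
    (hg₁ : ∀ x ∈ Set.Icc z₀ w₀, g x = f z₀)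
    (hg₂ : ∀ x ∈ Set.Icc w₀ (z₀ + 1), g x = f x)
    (hg₃ : ∀ x : ℝ, g (x + 1) = g x + 1)
    (hgc : Continuous g) (hgm : Monotone g) :
    Tendsto (fun n : ℕ => g^[n] 0 / (n : ℝ)) atTop (𝓝 (sSup (rotationSet f))) := by
  classical
  obtain ⟨⟨hfc, hf1⟩, hzy, hyz, hanti, hmono⟩ := hf
  set G : CircleDeg1Lift := wpLift g hgm hg₃ with hG
  set τ : ℝ := G.translationNumber with hτdef
  -- `w₀` belongs to the level set
  have hz01 : z₀ < z₀ + 1 := by linarith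
  have hw₀mem : w₀ ∈ {x ∈ Set.Icc z₀ (z₀ + 1) | f x = f z₀} := by
    have hScl : IsClosed {x ∈ Set.Icc z₀ (z₀ + 1) | f x = f z₀} := by
      have he : {x ∈ Set.Icc z₀ (z₀ + 1) | f x = f z₀}
          = Set.Icc z₀ (z₀ + 1) ∩ f ⁻¹' {f z₀} := by
        ext x; simp [Set.mem_sep_iff, Set.mem_inter_iff]
      rw [he]
      exact isClosed_Icc.inter (isClosed_singleton.preimage hfc)
    have hScp : IsCompact {x ∈ Set.Icc z₀ (z₀ + 1) | f x = f z₀} :=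
      isCompact_Icc.of_isClosed_subset hScl fun x hx => hx.1
    have hne : {x ∈ Set.Icc z₀ (z₀ + 1) | f x = f z₀}.Nonempty :=
      ⟨z₀, ⟨⟨le_refl _, hz01.le⟩, rfl⟩⟩
    rw [hw₀]
    exact hScp.sSup_mem hne
  have hzw : z₀ ≤ w₀ := hw₀mem.1.1
  have hwz1 : w₀ ≤ z₀ + 1 := hw₀mem.1.2
  have hfw : f w₀ = f z₀ := hw₀mem.2
  -- g w₀ = f z₀ = f w₀
  have hgw : g w₀ = f w₀ := by rw [hg₁ w₀ ⟨hzw, le_refl _⟩, hfw]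
  -- f = g off the flat interior (mod 1)
  have hfg_eq : ∀ x : ℝ, (∀ m : ℤ, x - m ∉ Set.Ioo z₀ w₀) → f x = g x := by
    intro x hx
    set m : ℤ := ⌊x - z₀⌋ with hm
    set y : ℝ := x - m with hy
    have hy1 : z₀ ≤ y := by
      have := Int.floor_le (x - z₀); rw [hy]; linarith
    have hy2 : y < z₀ + 1 := by
      have := Int.lt_floor_add_one (x - z₀); rw [hy]; push_cast at this ⊢; linarith
    have hxy : x = y + m := by rw [hy]; ring
    have hfx : f x = f y + m := by rw [hxy, wp_map_add_int hf1]
    have hgx : g x = g y + m := by rw [hxy, wp_map_add_int hg₃]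
    rcases le_or_gt w₀ y with h | h
    · rw [hfx, hgx, hg₂ y ⟨h, hy2.le⟩]
    · have hyz₀ : y = z₀ := by
        by_contra hne
        exact hx m ⟨lt_of_le_of_ne hy1 (Ne.symm hne), h⟩
      rw [hfx, hgx, hyz₀, hg₁ z₀ ⟨le_refl _, hzw⟩]
  -- `w₀` is not in the flat interior mod 1
  have hw₀notflat : ∀ m : ℤ, w₀ - m ∉ Set.Ioo z₀ w₀ := by
    intro m hmem
    rcases lt_trichotomy m 0 with h | h | h
    · have : (m : ℝ) ≤ -1 := by exact_mod_cast Int.le_sub_one_of_lt h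
      have := hmem.2; linarith
    · rw [h] at hmem; simp at hmem
    · have : (1 : ℝ) ≤ m := by exact_mod_cast h
      have := hmem.1; linarith
  -- f ≤ g
  have hfg : ∀ x : ℝ, f x ≤ g x := by
    intro x
    set m : ℤ := ⌊x - z₀⌋ with hm
    set y : ℝ := x - m with hy
    have hy1 : z₀ ≤ y := by
      have := Int.floor_le (x - z₀); rw [hy]; linarith
    have hy2 : y < z₀ + 1 := by
      have := Int.lt_floor_add_one (x - z₀); rw [hy]; push_cast at this ⊢; linarith
    have hxy : x = y + m := by rw [hy]; ring
    have hfx : f x = f y + m := by rw [hxy, wp_map_add_int hf1]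
    have hgx : g x = g y + m := by rw [hxy, wp_map_add_int hg₃]
    rw [hfx, hgx]
    have : f y ≤ g y := by
      rcases le_or_gt w₀ y with h | h
      · rw [hg₂ y ⟨h, hy2.le⟩]
      · rw [hg₁ y ⟨hy1, h.le⟩]
        rcases le_or_gt y y₀ with h2 | h2
        · exact (hanti.antitoneOn) ⟨le_refl _, hzy.le⟩ ⟨hy1, h2⟩ hy1
        · have hfyw : f y ≤ f w₀ :=
            (hmono.monotoneOn) ⟨h2.le, hy2.le⟩ ⟨(h2.trans h).le, hwz1⟩ h.le
          rw [hfw] at hfyw; exact hfyw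
    linarith
  -- iterates compare
  have hiter_le : ∀ (x : ℝ) (n : ℕ), f^[n] x ≤ g^[n] x := by
    intro x n
    induction n with
    | zero => exact le_refl _
    | succ n ih =>
        rw [Function.iterate_succ_apply', Function.iterate_succ_apply']
        exact le_trans (hfg _) (hgm ih)
  -- displacement of f bounded below
  obtain ⟨c, hc⟩ : ∃ c : ℝ, ∀ t : ℝ, c ≤ f t - t := by
    obtain ⟨t₀, ht₀, hmin⟩ := isCompact_Icc.exists_isMinOn (Set.nonempty_Icc.2 zero_le_one)
      ((hfc.sub continuous_id).continuousOn (s := Set.Icc (0:ℝ) 1))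
    refine ⟨f t₀ - t₀, fun t => ?_⟩
    set m : ℤ := ⌊t⌋ with hm
    have h1 : (0:ℝ) ≤ t - m := by have := Int.floor_le t; rw [hm]; linarith
    have h2 : t - m ≤ 1 := by
      have := Int.lt_floor_add_one t; rw [hm]; push_cast at this ⊢; linarith
    have h3 : f t - t = f (t - m) - (t - m) := by
      have : t = (t - m) + m := by ring
      rw [this, wp_map_add_int hf1]; ring
    rw [h3]
    exact hmin ⟨h1, h2⟩
  -- translation number limits for g
  have hgiter : ∀ x : ℝ, Tendsto (fun n : ℕ => (g^[n] x - x) / (n : ℝ)) atTop (𝓝 τ) := by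
    intro x
    have h := G.tendsto_translationNumber x
    refine h.congr fun n => ?_
    rw [CircleDeg1Lift.coe_pow]
    rfl
  -- every element of the rotation set is ≤ τ
  have hub : ∀ r ∈ rotationSet f, r ≤ τ := by
    rintro r ⟨x, rfl⟩
    have hlow : ∀ n : ℕ, x + n * c ≤ f^[n] x := by
      intro n
      induction n with
      | zero => simp
      | succ n ih =>
          rw [Function.iterate_succ_apply']
          have h1 := hc (f^[n] x)
          push_cast
          push_cast at ih
          linarith
    have hcobdd : IsCoboundedUnder (· ≤ ·) atTop (fun n : ℕ => (f^[n] x - x) / (n : ℝ)) := by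
      apply Filter.IsBoundedUnder.isCoboundedUnder_le
      apply isBoundedUnder_of
      refine ⟨min c 0, fun n => ?_⟩
      rcases Nat.eq_zero_or_pos n with h0 | h0
      · simp [h0, min_le_right c 0]
      · have hn' : (0 : ℝ) < n := by exact_mod_cast h0
        have hl := hlow n
        have : c ≤ (f^[n] x - x) / n := by
          rw [le_div_iff₀ hn']
          linarith
        exact le_trans (min_le_left c 0) this
    have hbddg : IsBoundedUnder (· ≤ ·) atTop (fun n : ℕ => (g^[n] x - x) / (n : ℝ)) :=
      (hgiter x).isBoundedUnder_le
    have hle : (fun n : ℕ => (f^[n] x - x) / (n : ℝ))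
        ≤ᶠ[atTop] fun n : ℕ => (g^[n] x - x) / (n : ℝ) := by
      refine Eventually.of_forall fun n => ?_
      have := hiter_le x n
      apply div_le_div_of_nonneg_right ?_ (Nat.cast_nonneg n)
      linarith
    calc limsup (fun n : ℕ => (f^[n] x - x) / (n : ℝ)) atTop
        ≤ limsup (fun n : ℕ => (g^[n] x - x) / (n : ℝ)) atTop :=
          limsup_le_limsup hle hcobdd hbddg
      _ = τ := (hgiter x).limsup_eq
  -- τ belongs to the rotation set
  have hmem : τ ∈ rotationSet f := by
    by_cases hA : ∀ n : ℕ, ∀ m : ℤ, g^[n] w₀ - m ∉ Set.Ioo z₀ w₀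
    · -- orbit of w₀ avoids the flat interior
      have hiter_eq : ∀ n : ℕ, f^[n] w₀ = g^[n] w₀ := by
        intro n
        induction n with
        | zero => rfl
        | succ n ih =>
            rw [Function.iterate_succ_apply', Function.iterate_succ_apply', ih,
              hfg_eq _ (hA n)]
      refine ⟨w₀, ?_⟩
      have := (hgiter w₀).limsup_eq
      rw [← this]
      apply limsup_congr
      refine Eventually.of_forall fun n => ?_
      rw [hiter_eq n]
    · push_neg at hA
      have hex : ∃ n : ℕ, ∃ m : ℤ, g^[n] w₀ - m ∈ Set.Ioo z₀ w₀ := hA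
      set k : ℕ := Nat.find hex with hk
      obtain ⟨m, hm⟩ := Nat.find_spec hex
      have hkpos : 0 < k := by
        rcases Nat.eq_zero_or_pos k with h0 | h0
        · exfalso
          obtain ⟨m', hm'⟩ := Nat.find_spec hex
          rw [hk] at h0
          rw [h0] at hm'
          exact hw₀notflat m' (by simpa using hm')
        · exact h0
      have hiter_eq : ∀ i : ℕ, i ≤ k → f^[i] w₀ = g^[i] w₀ := by
        intro i hi
        induction i with
        | zero => rfl
        | succ i ih =>
            have hik : i < k := Nat.lt_of_succ_le hi
            have hnot : ∀ m' : ℤ, g^[i] w₀ - m' ∉ Set.Ioo z₀ w₀ := by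
              have := Nat.find_min hex hik
              push_neg at this
              exact this
            rw [Function.iterate_succ_apply', Function.iterate_succ_apply',
              ih (le_of_lt hik), hfg_eq _ hnot]
      have hfk : f^[k] w₀ = g^[k] w₀ := hiter_eq k le_rfl
      -- g^[k] (g w₀) = g w₀ + m
      have hq : g^[k] (g w₀) = g w₀ + m := by
        have h1 : g^[k + 1] w₀ = g^[k] (g w₀) := Function.iterate_succ_apply g k w₀
        have h2 : g^[k + 1] w₀ = g (g^[k] w₀) := Function.iterate_succ_apply' g k w₀
        have h3 : g (g^[k] w₀) = g ((g^[k] w₀ - m) + m) := by rw [sub_add_cancel]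
        have h4 : g ((g^[k] w₀ - m) + m) = g (g^[k] w₀ - m) + m := wp_map_add_int hg₃ _ m
        have h5 : g (g^[k] w₀ - m) = f z₀ := hg₁ _ ⟨hm.1.le, hm.2.le⟩
        have h6 : g w₀ = f z₀ := hg₁ w₀ ⟨hzw, le_refl _⟩
        rw [← h1, h2, h3, h4, h5, ← h6]
      -- τ = m / k
      have hτ : τ = (m : ℝ) / k := by
        rw [hτdef]
        rw [G.translationNumber_eq_rat_iff (by rw [hG, wpLift_coe]; exact hgc) hkpos]
        refine ⟨g w₀, ?_⟩
        rw [CircleDeg1Lift.coe_pow, hG, wpLift_coe]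
        exact hq
      -- periodic point of f via IVT
      have hfz : f^[k] z₀ = f^[k] w₀ := by
        conv_lhs => rw [← Nat.succ_pred_eq_of_pos hkpos]
        conv_rhs => rw [← Nat.succ_pred_eq_of_pos hkpos]
        rw [Function.iterate_succ_apply, Function.iterate_succ_apply, hfw]
      have hmem1 : z₀ + (m : ℝ) < g^[k] w₀ := by have := hm.1; linarith
      have hmem2 : g^[k] w₀ < w₀ + (m : ℝ) := by have := hm.2; linarith
      have hcont : ContinuousOn (fun x => f^[k] x - x - (m : ℝ)) (Set.Icc z₀ w₀) :=
        (((hfc.iterate k).sub continuous_id).sub continuous_const).continuousOn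
      obtain ⟨p, hpmem, hpe⟩ : ∃ p ∈ Set.Icc z₀ w₀, f^[k] p - p - (m : ℝ) = 0 := by
        have h0 : (0 : ℝ) ∈ Set.Icc (f^[k] w₀ - w₀ - (m : ℝ)) (f^[k] z₀ - z₀ - (m : ℝ)) := by
          constructor
          · rw [hfk]; linarith
          · rw [hfz, hfk]; linarith
        have := intermediate_value_Icc' hzw hcont h0
        obtain ⟨p, hp1, hp2⟩ := this
        exact ⟨p, hp1, hp2⟩
      have hpk : f^[k] p = p + (m : ℝ) := by linarith
      have hpk' : f^[k] p = p + ((m : ℤ) : ℝ) := hpk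
      refine ⟨p, ?_⟩
      rw [hτ]
      exact (wp_tendsto_of_periodic hf1 hkpos hpk').limsup_eq
  -- conclude
  have hne : (rotationSet f).Nonempty := ⟨τ, hmem⟩
  have hbdd : BddAbove (rotationSet f) := ⟨τ, hub⟩
  have hsup : sSup (rotationSet f) = τ :=
    le_antisymm (csSup_le hne hub) (le_csSup hbdd hmem)
  rw [hsup]
  have h := G.tendsto_translation_number₀
  refine h.congr fun n => ?_
  rw [CircleDeg1Lift.coe_pow]
  rfl
end
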